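/- arXiv:1812.08100 — 4 statements merged into one kernel-verified Lean document; each statement's English description precedes it below -/
import Mathlib

section
/- Let Ω be a compact subset of ℝ^d with a probability measure μ, and let W be a class of real-valued continuous functions on Ω with ‖f‖_∞ ≤ M for all f ∈ W, such that the entropy numbers in the uniform norm satisfy ε_n(W) ≤ C₁ n^{−r} for all n, where r ∈ (0,1/2). Then there exists a constant K such that for every m ∈ ℕ there is a set of points ξ = {ξ^1,…,ξ^m} ⊂ Ω with |‖f‖_{L_2(μ)}² − (1/m)∑_{j=1}^m f(ξ^j)²| ≤ K m^{−r} for all f ∈ W; in particular er_m(W,L_2) ≤ K m^{−r}. -/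
open MeasureTheory
open Real
set_option maxHeartbeats 1000000

section Hoeffding

variable {α : Type*} [MeasurableSpace α]

/-- bounded measurable functions are integrable w.r.t. a probability measure -/
lemma integrable_of_abs_le (μ : Measure α) [IsProbabilityMeasure μ] (g : α → ℝ) (c : ℝ)
    (hg : Measurable g) (hb : ∀ x, |g x| ≤ c) : Integrable g μ := by
  refine Integrable.mono' (integrable_const c) hg.aestronglyMeasurable ?_
  exact Filter.Eventually.of_forall (fun x => by simpa [Real.norm_eq_abs] using hb x)

/-- the sub-Gaussian mgf bound for a centered variable bounded by `B`. -/
lemma mgf_bound (μ : Measure α) [IsProbabilityMeasure μ] (h : α → ℝ) (B s : ℝ) (hB : 0 < B)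
    (hmeas : Measurable h) (hb : ∀ x, |h x| ≤ B) (h0 : ∫ x, h x ∂μ = 0) :
    ∫ x, Real.exp (s * h x) ∂μ ≤ Real.exp (s ^ 2 * B ^ 2 / 2) := by
  have hint : Integrable h μ := integrable_of_abs_le μ h B hmeas hb
  have hkey : ∀ x, Real.exp (s * h x) ≤
      Real.cosh (s * B) + h x * (Real.sinh (s * B) / B) := by
    intro x
    have hy1 : -B ≤ h x := (abs_le.mp (hb x)).1
    have hy2 : h x ≤ B := (abs_le.mp (hb x)).2
    set y := h x with hy
    have hθ0 : 0 ≤ (B - y) / (2 * B) := by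
      apply div_nonneg _ (by positivity); linarith
    have hθ1 : 0 ≤ (B + y) / (2 * B) := by
      apply div_nonneg _ (by positivity); linarith
    have hsum : (B - y) / (2 * B) + (B + y) / (2 * B) = 1 := by
      field_simp; ring
    have hcvx := convexOn_exp.2 (Set.mem_univ (-(s * B))) (Set.mem_univ (s * B))
      hθ0 hθ1 hsum
    simp only [smul_eq_mul] at hcvx
    have harg : (B - y) / (2 * B) * (-(s * B)) + (B + y) / (2 * B) * (s * B) = s * y := by
      rw [div_mul_eq_mul_div, div_mul_eq_mul_div, ← add_div,
        show (B - y) * -(s * B) + (B + y) * (s * B) = s * y * (2 * B) by ring,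
        mul_div_assoc, div_self (by positivity), mul_one]
    rw [harg] at hcvx
    have : (B - y) / (2 * B) * Real.exp (-(s * B)) + (B + y) / (2 * B) * Real.exp (s * B)
        = Real.cosh (s * B) + y * (Real.sinh (s * B) / B) := by
      rw [Real.cosh_eq, Real.sinh_eq]
      field_simp
      ring
    rw [this] at hcvx
    exact hcvx
  have hintexp : Integrable (fun x => Real.exp (s * h x)) μ := by
    refine integrable_of_abs_le μ _ (Real.exp (|s| * B)) ((measurable_const.mul hmeas).exp) ?_
    intro x
    rw [abs_of_pos (Real.exp_pos _)]
    apply Real.exp_le_exp.mpr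
    calc s * h x ≤ |s * h x| := le_abs_self _
      _ = |s| * |h x| := abs_mul _ _
      _ ≤ |s| * B := by
          exact mul_le_mul_of_nonneg_left (hb x) (abs_nonneg s)
  have hintrhs : Integrable (fun x => Real.cosh (s * B) + h x * (Real.sinh (s * B) / B)) μ :=
    (integrable_const _).add (hint.mul_const _)
  calc ∫ x, Real.exp (s * h x) ∂μ
      ≤ ∫ x, (Real.cosh (s * B) + h x * (Real.sinh (s * B) / B)) ∂μ :=
        integral_mono hintexp hintrhs hkey
    _ = Real.cosh (s * B) + (∫ x, h x ∂μ) * (Real.sinh (s * B) / B) := by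
        rw [integral_add (integrable_const _) (hint.mul_const _), integral_const,
          integral_mul_const]
        simp
    _ = Real.cosh (s * B) := by rw [h0]; ring
    _ ≤ Real.exp ((s * B) ^ 2 / 2) := Real.cosh_le_exp_half_sq _
    _ = Real.exp (s ^ 2 * B ^ 2 / 2) := by ring_nf

end Hoeffding

section Pi

variable {α : Type*} [MeasureSpace α] [IsProbabilityMeasure (volume : Measure α)]

lemma hoeff_one_sided (m : ℕ) (hm : 0 < m) (h : α → ℝ) (B t : ℝ) (hB : 0 < B)
    (hmeas : Measurable h) (hb : ∀ x, |h x| ≤ B) (h0 : ∫ x, h x = 0) (ht : 0 ≤ t) :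
    (volume {ξ : Fin m → α | (m : ℝ) * t ≤ ∑ j, h (ξ j)}).toReal ≤
      Real.exp (-(m : ℝ) * t ^ 2 / (2 * B ^ 2)) := by
  haveI : IsProbabilityMeasure (volume : Measure (Fin m → α)) := by
    rw [volume_pi]; infer_instance
  set s : ℝ := t / B ^ 2 with hs
  have hs0 : 0 ≤ s := div_nonneg ht (by positivity)
  set X : (Fin m → α) → ℝ := fun ξ => ∑ j, h (ξ j) with hX
  have hXmeas : Measurable X := Finset.measurable_sum _ (fun j _ => hmeas.comp (measurable_pi_apply j))
  have hXbdd : ∀ ξ, |X ξ| ≤ m * B := by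
    intro ξ
    calc |∑ j, h (ξ j)| ≤ ∑ j : Fin m, |h (ξ j)| := Finset.abs_sum_le_sum_abs _ _
      _ ≤ ∑ _j : Fin m, B := Finset.sum_le_sum (fun j _ => hb _)
      _ = m * B := by simp [mul_comm]
  have hint : Integrable (fun ξ => Real.exp (s * X ξ)) volume := by
    refine integrable_of_abs_le _ _ (Real.exp (|s| * (m * B)))
      ((measurable_const.mul hXmeas).exp) ?_
    intro x
    rw [abs_of_pos (Real.exp_pos _)]
    apply Real.exp_le_exp.mpr
    calc s * X x ≤ |s * X x| := le_abs_self _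
      _ = |s| * |X x| := abs_mul _ _
      _ ≤ |s| * (m * B) := mul_le_mul_of_nonneg_left (hXbdd x) (abs_nonneg s)
  have hmgf : ProbabilityTheory.mgf X volume s ≤ Real.exp ((m : ℝ) * (s ^ 2 * B ^ 2 / 2)) := by
    unfold ProbabilityTheory.mgf
    have : (fun ξ : Fin m → α => Real.exp (s * X ξ)) =
        fun ξ : Fin m → α => ∏ j, Real.exp (s * h (ξ j)) := by
      funext ξ
      rw [hX]
      rw [Finset.mul_sum, Real.exp_sum]
    rw [show (∫ ξ, Real.exp (s * X ξ)) = ∫ ξ : Fin m → α, ∏ j, Real.exp (s * h (ξ j)) by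
      rw [this]]
    rw [volume_pi, integral_fintype_prod_eq_pow (ι := Fin m) (fun x => Real.exp (s * h x))]
    have h1 : ∫ x, Real.exp (s * h x) ≤ Real.exp (s ^ 2 * B ^ 2 / 2) :=
      mgf_bound volume h B s hB hmeas hb h0
    have h2 : (0:ℝ) ≤ ∫ x, Real.exp (s * h x) :=
      integral_nonneg (fun x => (Real.exp_pos _).le)
    calc (∫ x, Real.exp (s * h x)) ^ Fintype.card (Fin m)
        ≤ Real.exp (s ^ 2 * B ^ 2 / 2) ^ Fintype.card (Fin m) := by
          exact pow_le_pow_left₀ h2 h1 _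
      _ = Real.exp ((m : ℝ) * (s ^ 2 * B ^ 2 / 2)) := by
          rw [← Real.exp_nat_mul]; simp
  have hcher := ProbabilityTheory.measure_ge_le_exp_mul_mgf (X := X) (μ := volume)
    ((m : ℝ) * t) hs0 hint
  refine hcher.trans ?_
  calc Real.exp (-s * ((m:ℝ) * t)) * ProbabilityTheory.mgf X volume s
      ≤ Real.exp (-s * ((m:ℝ) * t)) * Real.exp ((m : ℝ) * (s ^ 2 * B ^ 2 / 2)) := by
        exact mul_le_mul_of_nonneg_left hmgf (Real.exp_pos _).le
    _ = Real.exp (-s * ((m:ℝ) * t) + (m : ℝ) * (s ^ 2 * B ^ 2 / 2)) := (Real.exp_add _ _).symm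
    _ = Real.exp (-(m : ℝ) * t ^ 2 / (2 * B ^ 2)) := by
        congr 1
        rw [hs]
        field_simp
        ring

lemma hoeff_two_sided (m : ℕ) (hm : 0 < m) (h : α → ℝ) (B t : ℝ) (hB : 0 < B)
    (hmeas : Measurable h) (hb : ∀ x, |h x| ≤ B) (ht : 0 ≤ t) :
    (volume {ξ : Fin m → α | t < |(∫ x, h x) - (1 / (m : ℝ)) * ∑ j, h (ξ j)|}).toReal ≤
      2 * Real.exp (-(m : ℝ) * t ^ 2 / (8 * B ^ 2)) := by
  haveI : IsProbabilityMeasure (volume : Measure (Fin m → α)) := by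
    rw [volume_pi]; infer_instance
  have hinth : Integrable h volume := integrable_of_abs_le _ h B hmeas hb
  set c : α → ℝ := fun x => h x - ∫ y, h y with hc
  have hcmeas : Measurable c := hmeas.sub measurable_const
  have hIbd : |∫ y, h y| ≤ B := by
    calc |∫ y, h y| ≤ ∫ y, |h y| := by
          simpa [Real.norm_eq_abs] using norm_integral_le_integral_norm (μ := volume) h
      _ ≤ ∫ _y : α, B := integral_mono hinth.abs (integrable_const _) (fun y => hb y)
      _ = B := by simp
  have hcb : ∀ x, |c x| ≤ 2 * B := by
    intro x
    calc |c x| ≤ |h x| + |∫ y, h y| := abs_sub _ _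
      _ ≤ B + B := add_le_add (hb x) hIbd
      _ = 2 * B := by ring
  have hc0 : ∫ x, c x = 0 := by
    rw [hc]
    rw [integral_sub hinth (integrable_const _), integral_const]
    simp
  have hsub : {ξ : Fin m → α | t < |(∫ x, h x) - (1 / (m : ℝ)) * ∑ j, h (ξ j)|} ⊆
      {ξ : Fin m → α | (m : ℝ) * t ≤ ∑ j, c (ξ j)} ∪
      {ξ : Fin m → α | (m : ℝ) * t ≤ ∑ j, (-c) (ξ j)} := by
    intro ξ hξ
    simp only [Set.mem_setOf_eq] at hξ
    have hmR : (0:ℝ) < m := by exact_mod_cast hm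
    have hsum : (∫ x, h x) - (1 / (m : ℝ)) * ∑ j, h (ξ j) = -(1 / (m : ℝ)) * ∑ j, c (ξ j) := by
      simp only [hc]
      rw [Finset.sum_sub_distrib]
      simp only [Finset.sum_const, Finset.card_univ, Fintype.card_fin, nsmul_eq_mul]
      field_simp
      ring
    rw [hsum] at hξ
    rw [abs_mul, abs_neg, abs_of_pos (by positivity : (0:ℝ) < 1 / (m:ℝ))] at hξ
    have hmt : (m : ℝ) * t < |∑ j, c (ξ j)| := by
      have h2 : t * m < |∑ j, c (ξ j)| := by
        rw [← lt_div_iff₀ hmR]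
        calc t < 1 / (m:ℝ) * |∑ j, c (ξ j)| := hξ
          _ = |∑ j, c (ξ j)| / m := by rw [one_div, inv_mul_eq_div]
      linarith [h2]
    rcases abs_cases (∑ j, c (ξ j)) with ⟨he, _⟩ | ⟨he, _⟩
    · left
      exact le_of_lt (he ▸ hmt)
    · right
      simp only [Set.mem_setOf_eq, Pi.neg_apply]
      have hss : ∑ x : Fin m, -c (ξ x) = -∑ j : Fin m, c (ξ j) := by
        simp
      rw [hss]
      linarith [he ▸ hmt]
  have hA := hoeff_one_sided m hm c (2 * B) t (by positivity) hcmeas hcb hc0 ht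
  have hA' := hoeff_one_sided m hm (-c) (2 * B) t (by positivity) hcmeas.neg
    (fun x => by simpa using hcb x)
    (by simp only [Pi.neg_apply]; rw [integral_neg, hc0, neg_zero]) ht
  have hmono : volume {ξ : Fin m → α | t < |(∫ x, h x) - (1 / (m : ℝ)) * ∑ j, h (ξ j)|} ≤
      volume ({ξ : Fin m → α | (m : ℝ) * t ≤ ∑ j, c (ξ j)} ∪
        {ξ : Fin m → α | (m : ℝ) * t ≤ ∑ j, (-c) (ξ j)}) := measure_mono hsub
  have hfin : volume {ξ : Fin m → α | (m : ℝ) * t ≤ ∑ j, c (ξ j)} +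
      volume {ξ : Fin m → α | (m : ℝ) * t ≤ ∑ j, (-c) (ξ j)} ≠ ⊤ :=
    ENNReal.add_ne_top.mpr ⟨measure_ne_top _ _, measure_ne_top _ _⟩
  calc (volume {ξ : Fin m → α | t < |(∫ x, h x) - (1 / (m : ℝ)) * ∑ j, h (ξ j)|}).toReal
      ≤ (volume {ξ : Fin m → α | (m : ℝ) * t ≤ ∑ j, c (ξ j)} +
          volume {ξ : Fin m → α | (m : ℝ) * t ≤ ∑ j, (-c) (ξ j)}).toReal := by
        apply ENNReal.toReal_mono hfin
        exact hmono.trans (measure_union_le _ _)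
    _ = (volume {ξ : Fin m → α | (m : ℝ) * t ≤ ∑ j, c (ξ j)}).toReal +
        (volume {ξ : Fin m → α | (m : ℝ) * t ≤ ∑ j, (-c) (ξ j)}).toReal :=
        ENNReal.toReal_add (measure_ne_top _ _) (measure_ne_top _ _)
    _ ≤ Real.exp (-(m : ℝ) * t ^ 2 / (2 * (2*B) ^ 2)) +
        Real.exp (-(m : ℝ) * t ^ 2 / (2 * (2*B) ^ 2)) := add_le_add hA hA'
    _ = 2 * Real.exp (-(m : ℝ) * t ^ 2 / (8 * B ^ 2)) := by
        rw [show (2 * (2*B)^2) = 8 * B^2 by ring]; ring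

end Pi


/-- The entropy numbers of a class `W` of functions in the uniform norm:
`ε_n(W) = inf{ε > 0 : ∃ f₁,…,f_{2ⁿ} ∈ W covering W by balls of radius ε in ‖·‖_∞}`. -/
noncomputable def entropyNum {Ω : Type*} (W : Set (Ω → ℝ)) (n : ℕ) : ℝ :=
  sInf {ε : ℝ | 0 < ε ∧ ∃ g : Fin (2 ^ n) → (Ω → ℝ), (∀ i, g i ∈ W) ∧
    ∀ f ∈ W, ∃ i, ∀ x, |f x - g i x| ≤ ε}

/-- If `W` is a class of continuous functions on a compact `Ω ⊂ ℝ^d` with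
`‖f‖_∞ ≤ M` for all `f ∈ W` and `ε_n(W) ≤ C₁ n^{−r}` for all `n ≥ 1`, where `r ∈ (0, 1/2)`,
then there is a constant `K` such that for every `m` there are points `ξ¹,…,ξᵐ ∈ Ω` with
`|‖f‖_{L₂(μ)}² − (1/m)∑ⱼ f(ξʲ)²| ≤ K m^{−r}` for all `f ∈ W`. -/
theorem discretization_entropy_polynomial {d : ℕ} (Ω : Set (Fin d → ℝ)) (hΩ : IsCompact Ω)
    (μ : Measure Ω) [IsProbabilityMeasure μ]
    (W : Set (Ω → ℝ)) (M : ℝ) (C₁ r : ℝ) (hr0 : 0 < r) (hr : r < 1 / 2)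
    (hWc : ∀ f ∈ W, Continuous f)
    (hWb : ∀ f ∈ W, ∀ x, |f x| ≤ M)
    (hent : ∀ n : ℕ, 1 ≤ n → entropyNum W n ≤ C₁ * (n : ℝ) ^ (-r)) :
    ∃ K : ℝ, ∀ m : ℕ, 0 < m → ∃ ξ : Fin m → Ω, ∀ f ∈ W,
      |(∫ x, (f x) ^ 2 ∂μ) - (1 / (m : ℝ)) * ∑ j, (f (ξ j)) ^ 2|
        ≤ K * (m : ℝ) ^ (-r) := by
  classical
  haveI hne : Nonempty ↥Ω := by
    by_contra hcon
    haveI : IsEmpty ↥Ω := not_nonempty_iff.mp hcon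
    have h1 : μ Set.univ = 1 := measure_univ
    rw [Set.univ_eq_empty_iff.mpr ‹IsEmpty ↥Ω›, measure_empty] at h1
    exact zero_ne_one h1
  obtain ⟨x₀⟩ := hne
  rcases Set.eq_empty_or_nonempty W with hWe | ⟨f₀, hf₀⟩
  · refine ⟨0, fun m hm => ⟨fun _ => x₀, fun f hf => ?_⟩⟩
    rw [hWe] at hf
    exact absurd hf (Set.notMem_empty f)
  set M' : ℝ := max M 1 with hM'def
  have hM'1 : (1:ℝ) ≤ M' := le_max_right _ _
  have hM'pos : (0:ℝ) < M' := zero_lt_one.trans_le hM'1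
  have hWb' : ∀ f ∈ W, ∀ x, |f x| ≤ M' := fun f hf x => (hWb f hf x).trans (le_max_left _ _)
  -- C₁ ≥ 0
  have hC₁ : 0 ≤ C₁ := by
    have h1 := hent 1 le_rfl
    have h2 : 0 ≤ entropyNum W 1 := by
      apply Real.sInf_nonneg
      rintro ε ⟨hε, -⟩
      exact hε.le
    have h3 : ((1:ℕ):ℝ) ^ (-r) = 1 := by
      norm_num
    rw [h3, mul_one] at h1
    linarith
  set D : ℝ := C₁ + 1 with hDdef
  have hD : 0 < D := by positivity
  set δ : ℕ → ℝ := fun k => D * (2:ℝ) ^ (-((k:ℝ) * r)) with hδdef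
  have hδpos : ∀ k, 0 < δ k := fun k => mul_pos hD (Real.rpow_pos_of_pos two_pos _)
  -- nets
  have hnet : ∀ k : ℕ, ∃ g : Fin (2^(2^k)) → (↥Ω → ℝ), (∀ i, g i ∈ W) ∧
      ∀ f ∈ W, ∃ i, ∀ x, |f x - g i x| ≤ δ k := by
    intro k
    have hSne : Set.Nonempty {ε : ℝ | 0 < ε ∧ ∃ g : Fin (2 ^ (2^k)) → (↥Ω → ℝ),
        (∀ i, g i ∈ W) ∧ ∀ f ∈ W, ∃ i, ∀ x, |f x - g i x| ≤ ε} := by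
      refine ⟨2 * M' + 1, by positivity, fun _ => f₀, fun _ => hf₀, ?_⟩
      intro f hf
      refine ⟨0, fun x => ?_⟩
      calc |f x - f₀ x| ≤ |f x| + |f₀ x| := abs_sub _ _
        _ ≤ M' + M' := add_le_add (hWb' f hf x) (hWb' f₀ hf₀ x)
        _ ≤ 2 * M' + 1 := by linarith
    have hcast : ((2^k : ℕ) : ℝ) ^ (-r) = (2:ℝ) ^ (-((k:ℝ) * r)) := by
      rw [Nat.cast_pow, Nat.cast_ofNat, ← Real.rpow_natCast (2:ℝ) k,
        ← Real.rpow_mul (by norm_num : (0:ℝ) ≤ 2)]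
      ring_nf
    have hlt : entropyNum W (2^k) < δ k := by
      calc entropyNum W (2^k) ≤ C₁ * ((2^k : ℕ) : ℝ) ^ (-r) :=
            hent (2^k) Nat.one_le_two_pow
        _ = C₁ * (2:ℝ) ^ (-((k:ℝ) * r)) := by rw [hcast]
        _ < D * (2:ℝ) ^ (-((k:ℝ) * r)) := by
            have hp : (0:ℝ) < (2:ℝ) ^ (-((k:ℝ) * r)) := Real.rpow_pos_of_pos two_pos _
            have : C₁ < D := by rw [hDdef]; linarith
            exact mul_lt_mul_of_pos_right this hp
        _ = δ k := rfl
    obtain ⟨ε, ⟨hεpos, g, hgmem, hgcov⟩, hεlt⟩ := exists_lt_of_csInf_lt hSne hlt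
    refine ⟨g, hgmem, fun f hf => ?_⟩
    obtain ⟨i, hi⟩ := hgcov f hf
    exact ⟨i, fun x => (hi x).trans hεlt.le⟩
  choose nets hnmem hncov using hnet
  choose proj hproj using hncov
  set Q : ℝ := max (M'^2) (6 * M' * D) with hQdef
  have hQ1 : M'^2 ≤ Q := le_max_left _ _
  have hQ2 : 6 * M' * D ≤ Q := le_max_right _ _
  have hQpos : 0 < Q := lt_of_lt_of_le (by positivity) hQ1
  set a : ℝ := 1/2 - r with hadef
  have ha : 0 < a := by rw [hadef]; linarith
  have h2a : 1 < (2:ℝ) ^ a := Real.one_lt_rpow_iff_of_pos two_pos |>.mpr (Or.inl ⟨one_lt_two, ha⟩)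
  refine ⟨12 * Q / ((2:ℝ)^a - 1) + 8 * M' * D, ?_⟩
  intro m hm
  have hmR : (0:ℝ) < m := by exact_mod_cast hm
  letI : MeasureSpace ↥Ω := ⟨μ⟩
  haveI hPM : IsProbabilityMeasure (volume : Measure ↥Ω) := ‹IsProbabilityMeasure μ›
  set L : ℕ := max 1 (Nat.log 2 m) with hLdef
  have hL1 : 1 ≤ L := le_max_left _ _
  have hmle : (m:ℝ) ≤ 2^(L+1) := by
    have h1 : m < 2^(Nat.log 2 m + 1) := Nat.lt_pow_succ_log_self one_lt_two m
    have h2 : 2^(Nat.log 2 m + 1) ≤ 2^(L+1) :=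
      Nat.pow_le_pow_right (by norm_num) (by omega)
    have : m ≤ 2^(L+1) := le_of_lt (lt_of_lt_of_le h1 h2)
    exact_mod_cast this
  have h2Lle : (2:ℝ)^(L+1) ≤ 4 * m := by
    have : 2^(L+1) ≤ 4 * m := by
      rcases Nat.lt_or_ge m 2 with hm2 | hm2
      · have hm1 : m = 1 := by omega
        have hL1' : L = 1 := by
          rw [hLdef, hm1, Nat.log_one_right]
          rfl
        rw [hL1', hm1]
        norm_num
      · have hlog : 1 ≤ Nat.log 2 m := Nat.one_le_iff_ne_zero.mpr (by
          intro h0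
          have := Nat.log_eq_zero_iff.mp h0
          omega)
        have hLeq : L = Nat.log 2 m := max_eq_right hlog
        have h1 : 2^(Nat.log 2 m) ≤ m := Nat.pow_log_le_self 2 (by omega)
        calc 2^(L+1) = 2 * 2^(Nat.log 2 m) := by rw [hLeq]; ring
          _ ≤ 2 * m := by omega
          _ ≤ 4 * m := by omega
    exact_mod_cast this
  set B : ℕ → ℝ := fun k => if k = 0 then M'^2 else 2*M'*(δ k + δ (k-1)) with hBdef
  have hBpos : ∀ k, 0 < B k := by
    intro k
    rw [hBdef]
    dsimp only
    split
    · positivity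
    · have := hδpos k
      have := hδpos (k-1)
      positivity
  set t : ℕ → ℝ := fun k => B k * Real.sqrt (8 * 2^(k+2) / m) with htdef
  have htnn : ∀ k, 0 ≤ t k := by
    intro k
    exact mul_nonneg (hBpos k).le (Real.sqrt_nonneg _)
  have hexp : ∀ k : ℕ, -(m:ℝ) * (t k)^2 / (8 * (B k)^2) = -((2:ℝ)^(k+2)) := by
    intro k
    have h8 : (0:ℝ) ≤ 8 * 2^(k+2) / m := by positivity
    have : (t k)^2 = (B k)^2 * (8 * 2^(k+2) / m) := by
      rw [htdef]
      dsimp only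
      rw [mul_pow, Real.sq_sqrt h8]
    rw [this]
    have hB0 : (B k) ≠ 0 := (hBpos k).ne'
    field_simp
  -- events
  set E0 : Fin (2^(2^0)) → Set (Fin m → ↥Ω) := fun i =>
    {ξ | t 0 < |(∫ x, (nets 0 i x)^2) - (1/(m:ℝ)) * ∑ j, (nets 0 i (ξ j))^2|} with hE0def
  set Ep : (k : ℕ) → Fin (2^(2^k)) → Fin (2^(2^(k-1))) → Set (Fin m → ↥Ω) := fun k i j =>
    {ξ | (∀ x, |nets k i x - nets (k-1) j x| ≤ δ k + δ (k-1)) ∧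
      t k < |(∫ x, ((nets k i x)^2 - (nets (k-1) j x)^2)) -
        (1/(m:ℝ)) * ∑ j', ((nets k i (ξ j'))^2 - (nets (k-1) j (ξ j'))^2)|} with hEpdef
  set bad : Set (Fin m → ↥Ω) :=
    (⋃ i, E0 i) ∪ ⋃ k ∈ Finset.Icc 1 L, ⋃ i, ⋃ j, Ep k i j with hbaddef
  have hmeasg : ∀ (k : ℕ) (i : Fin (2^(2^k))), Measurable (nets k i) := fun k i =>
    (hWc _ (hnmem k i)).measurable
  have hE0 : ∀ i, (volume (E0 i)) ≤ ENNReal.ofReal (2 * Real.exp (-((2:ℝ)^(0+2)))) := by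
    intro i
    rw [ENNReal.le_ofReal_iff_toReal_le (measure_ne_top _ _) (by positivity)]
    have hmeas : Measurable (fun x => (nets 0 i x)^2) := (hmeasg 0 i).pow_const 2
    have hbd : ∀ x, |(nets 0 i x)^2| ≤ M'^2 := by
      intro x
      rw [abs_pow]
      exact pow_le_pow_left₀ (abs_nonneg _) (hWb' _ (hnmem 0 i) x) 2
    have h := hoeff_two_sided (α := ↥Ω) m hm (fun x => (nets 0 i x)^2) (M'^2) (t 0)
      (by positivity) hmeas hbd (htnn 0)
    have he : -(m:ℝ) * (t 0)^2 / (8 * (M'^2)^2) = -((2:ℝ)^(0+2)) := by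
      have h0 := hexp 0
      have hB0 : B 0 = M'^2 := by rw [hBdef]; simp
      rw [hB0] at h0
      exact h0
    calc (volume (E0 i)).toReal
        ≤ 2 * Real.exp (-(m:ℝ) * (t 0)^2 / (8 * (M'^2)^2)) := h
      _ = 2 * Real.exp (-((2:ℝ)^(0+2))) := by rw [he]
  have hEp : ∀ k, 1 ≤ k → ∀ i j, (volume (Ep k i j)) ≤
      ENNReal.ofReal (2 * Real.exp (-((2:ℝ)^(k+2)))) := by
    intro k hk i j
    have hk0 : k ≠ 0 := by omega
    by_cases hclose : ∀ x, |nets k i x - nets (k-1) j x| ≤ δ k + δ (k-1)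
    · have hsub : Ep k i j ⊆ {ξ : Fin m → ↥Ω | t k <
          |(∫ x, ((nets k i x)^2 - (nets (k-1) j x)^2)) -
            (1/(m:ℝ)) * ∑ j', ((nets k i (ξ j'))^2 - (nets (k-1) j (ξ j'))^2)|} :=
        fun ξ hmem => hmem.2
      have hmeas : Measurable (fun x => (nets k i x)^2 - (nets (k-1) j x)^2) :=
        ((hmeasg k i).pow_const 2).sub ((hmeasg (k-1) j).pow_const 2)
      have hbd : ∀ x, |(nets k i x)^2 - (nets (k-1) j x)^2| ≤ B k := by
        intro x
        have hfac : (nets k i x)^2 - (nets (k-1) j x)^2 =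
            (nets k i x - nets (k-1) j x) * (nets k i x + nets (k-1) j x) := by ring
        rw [hfac, abs_mul]
        have h1 : |nets k i x - nets (k-1) j x| ≤ δ k + δ (k-1) := hclose x
        have h2 : |nets k i x + nets (k-1) j x| ≤ 2 * M' := by
          calc |nets k i x + nets (k-1) j x| ≤ |nets k i x| + |nets (k-1) j x| := abs_add_le _ _
            _ ≤ M' + M' := add_le_add (hWb' _ (hnmem k i) x) (hWb' _ (hnmem (k-1) j) x)
            _ = 2 * M' := by ring
        have hBk : B k = 2*M'*(δ k + δ (k-1)) := by rw [hBdef]; simp [hk0]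
        rw [hBk]
        calc |nets k i x - nets (k-1) j x| * |nets k i x + nets (k-1) j x|
            ≤ (δ k + δ (k-1)) * (2 * M') := by
              apply mul_le_mul h1 h2 (abs_nonneg _)
              positivity
          _ = 2*M'*(δ k + δ (k-1)) := by ring
      have h := hoeff_two_sided (α := ↥Ω) m hm
        (fun x => (nets k i x)^2 - (nets (k-1) j x)^2) (B k) (t k)
        (hBpos k) hmeas hbd (htnn k)
      calc volume (Ep k i j)
          ≤ volume {ξ : Fin m → ↥Ω | t k <
            |(∫ x, ((nets k i x)^2 - (nets (k-1) j x)^2)) -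
              (1/(m:ℝ)) * ∑ j', ((nets k i (ξ j'))^2 - (nets (k-1) j (ξ j'))^2)|} :=
            measure_mono hsub
        _ ≤ ENNReal.ofReal (2 * Real.exp (-((2:ℝ)^(k+2)))) := by
            rw [ENNReal.le_ofReal_iff_toReal_le (measure_ne_top _ _) (by positivity)]
            calc (volume {ξ : Fin m → ↥Ω | t k <
                |(∫ x, ((nets k i x)^2 - (nets (k-1) j x)^2)) -
                  (1/(m:ℝ)) * ∑ j', ((nets k i (ξ j'))^2 - (nets (k-1) j (ξ j'))^2)|}).toReal
                ≤ 2 * Real.exp (-(m:ℝ) * (t k)^2 / (8 * (B k)^2)) := h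
              _ = 2 * Real.exp (-((2:ℝ)^(k+2))) := by rw [hexp k]
    · have hzero : volume (Ep k i j) = 0 := by
        have hempty : Ep k i j ⊆ (∅ : Set (Fin m → ↥Ω)) := by
          intro ξ hmem
          exact absurd hmem.1 hclose
        exact measure_mono_null hempty measure_empty
      rw [hzero]
      exact zero_le
  set p : ℕ → ℝ := fun k => 2 * Real.exp (-((2:ℝ)^(k+2))) with hpdef
  have hppos : ∀ k, 0 ≤ p k := fun k => by positivity
  have hexp4 : (53:ℝ) ≤ Real.exp 4 := by
    have h1 : (2.7182818283:ℝ) ≤ Real.exp 1 := le_of_lt Real.exp_one_gt_d9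
    calc (53:ℝ) ≤ 2.7182818283^(4:ℕ) := by norm_num
      _ ≤ (Real.exp 1)^(4:ℕ) := pow_le_pow_left₀ (by norm_num) h1 4
      _ = Real.exp 4 := by
          rw [← Real.exp_nat_mul]
          norm_num
  have hterm : ∀ k ∈ Finset.Icc 1 L, ((2^(2^k) * 2^(2^(k-1)) : ℕ) : ℝ) * p k ≤
      1/16 * (1/2:ℝ)^k := by
    intro k hk
    have hk1 : 1 ≤ k := (Finset.mem_Icc.mp hk).1
    obtain ⟨j, rfl⟩ : ∃ j, k = j + 1 := ⟨k - 1, by omega⟩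
    have hj : (j + 1) - 1 = j := by omega
    rw [hj]
    have hgrow : (2:ℝ)^(5 * 2^(j+1)) ≤ Real.exp ((2:ℝ)^(j+1+2)) := by
      have harg : (2:ℝ)^(j+1+2) = ((2^(j+1):ℕ):ℝ) * 4 := by
        push_cast
        rw [show j+1+2 = (j+1)+2 by ring, pow_add]
        ring
      rw [harg, Real.exp_nat_mul]
      calc (2:ℝ)^(5*2^(j+1)) = ((2:ℝ)^5)^(2^(j+1)) := by rw [← pow_mul]
        _ ≤ (Real.exp 4)^(2^(j+1)) :=
            pow_le_pow_left₀ (by norm_num) ((by norm_num : (2:ℝ)^5 ≤ 53).trans hexp4) _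
    have hpk : p (j+1) ≤ 2 * ((2:ℝ)^(5*2^(j+1)))⁻¹ := by
      rw [hpdef]
      dsimp only
      rw [Real.exp_neg]
      have := inv_anti₀ (by positivity : (0:ℝ) < (2:ℝ)^(5*2^(j+1))) hgrow
      linarith
    have hcast : ((2^(2^(j+1)) * 2^(2^j) : ℕ) : ℝ) = (2:ℝ)^(2^(j+1) + 2^j) := by
      push_cast
      rw [pow_add]
      norm_num
      rw [← pow_add]
    rw [hcast]
    have hnat : 2^(j+1) + 2^j + 1 + (j+5) ≤ 5 * 2^(j+1) := by
      have h2j : j < 2^j := Nat.lt_two_pow_self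
      have h2 : 2^(j+1) = 2 * 2^j := by rw [pow_succ]; ring
      omega
    have hle2 : (2:ℝ)^(2^(j+1)+2^j+1+(j+5)) ≤ (2:ℝ)^(5*2^(j+1)) :=
      pow_le_pow_right₀ one_le_two hnat
    have hrhs : (1:ℝ)/16 * (1/2:ℝ)^(j+1) = ((2:ℝ)^(j+5))⁻¹ := by
      rw [div_pow, one_pow]
      rw [show (j+5) = (j+1)+4 by ring, pow_add]
      field_simp
      ring
    calc (2:ℝ)^(2^(j+1) + 2^j) * p (j+1)
        ≤ (2:ℝ)^(2^(j+1) + 2^j) * (2 * ((2:ℝ)^(5*2^(j+1)))⁻¹) :=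
          mul_le_mul_of_nonneg_left hpk (by positivity)
      _ ≤ 1/16 * (1/2:ℝ)^(j+1) := by
          rw [hrhs]
          rw [show (2:ℝ)^(2^(j+1) + 2^j) * (2 * ((2:ℝ)^(5*2^(j+1)))⁻¹) =
            (2:ℝ)^(2^(j+1) + 2^j + 1) / (2:ℝ)^(5*2^(j+1)) by rw [pow_succ]; ring]
          rw [div_le_iff₀ (by positivity), ← one_div, div_mul_eq_mul_div, one_mul,
            le_div_iff₀ (by positivity)]
          calc (2:ℝ)^(2^(j+1) + 2^j + 1) * (2:ℝ)^(j+5) = (2:ℝ)^(2^(j+1)+2^j+1+(j+5)) := by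
                rw [← pow_add]
            _ ≤ (2:ℝ)^(5*2^(j+1)) := hle2
  have hbad : volume bad < 1 := by
    have h1 : volume (⋃ i, E0 i) ≤ ENNReal.ofReal (2 * p 0) := by
      calc volume (⋃ i, E0 i) ≤ ∑ i : Fin (2^(2^0)), volume (E0 i) :=
            measure_iUnion_fintype_le _ _
        _ ≤ ∑ _i : Fin (2^(2^0)), ENNReal.ofReal (p 0) :=
            Finset.sum_le_sum (fun i _ => hE0 i)
        _ = (2^(2^0) : ℕ) • ENNReal.ofReal (p 0) := by
            rw [Finset.sum_const, Finset.card_univ, Fintype.card_fin]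
        _ = ENNReal.ofReal (2 * p 0) := by
            rw [nsmul_eq_mul, ENNReal.ofReal_mul (by norm_num : (0:ℝ) ≤ 2)]
            rw [hpdef]
            dsimp only
            rw [ENNReal.ofReal_mul (by norm_num : (0:ℝ) ≤ 2), ENNReal.ofReal_ofNat]
            norm_num
    have h2 : ∀ k ∈ Finset.Icc 1 L, volume (⋃ i, ⋃ j, Ep k i j) ≤
        ENNReal.ofReal (((2^(2^k) * 2^(2^(k-1)) : ℕ) : ℝ) * p k) := by
      intro k hk
      calc volume (⋃ i, ⋃ j, Ep k i j)
          ≤ ∑ i : Fin (2^(2^k)), volume (⋃ j, Ep k i j) := measure_iUnion_fintype_le _ _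
        _ ≤ ∑ _i : Fin (2^(2^k)), ∑ _j : Fin (2^(2^(k-1))), ENNReal.ofReal (p k) :=
            Finset.sum_le_sum (fun i _ => (measure_iUnion_fintype_le _ _).trans
              (Finset.sum_le_sum (fun j _ => hEp k (Finset.mem_Icc.mp hk).1 i j)))
        _ = ((2^(2^k) * 2^(2^(k-1)) : ℕ)) • ENNReal.ofReal (p k) := by
            rw [Finset.sum_const, Finset.sum_const, Finset.card_univ, Fintype.card_fin,
              Finset.card_univ, Fintype.card_fin, smul_smul]
        _ = ENNReal.ofReal (((2^(2^k) * 2^(2^(k-1)) : ℕ) : ℝ) * p k) := by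
            rw [nsmul_eq_mul, ← ENNReal.ofReal_natCast, ← ENNReal.ofReal_mul (Nat.cast_nonneg _)]
    have hsumlt : 2 * p 0 + ∑ k ∈ Finset.Icc 1 L,
        ((2^(2^k) * 2^(2^(k-1)) : ℕ) : ℝ) * p k < 1 := by
      have hp0 : 2 * p 0 ≤ 4/53 := by
        rw [hpdef]
        dsimp only
        rw [show ((2:ℝ)^(0+2)) = 4 by norm_num, Real.exp_neg]
        have h53 : (0:ℝ) < 53 := by norm_num
        have := inv_anti₀ h53 hexp4
        rw [show (4:ℝ)/53 = 2 * (2 * 53⁻¹) by ring]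
        have : (Real.exp 4)⁻¹ ≤ 53⁻¹ := by
          apply inv_anti₀ h53 hexp4
        linarith
      have hsum2 : ∑ k ∈ Finset.Icc 1 L, ((2^(2^k) * 2^(2^(k-1)) : ℕ) : ℝ) * p k ≤ 1/8 := by
        calc ∑ k ∈ Finset.Icc 1 L, ((2^(2^k) * 2^(2^(k-1)) : ℕ) : ℝ) * p k
            ≤ ∑ k ∈ Finset.Icc 1 L, 1/16 * (1/2:ℝ)^k := Finset.sum_le_sum hterm
          _ ≤ ∑ k ∈ Finset.range (L+1), 1/16 * (1/2:ℝ)^k := by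
              apply Finset.sum_le_sum_of_subset_of_nonneg
              · intro x hx
                rw [Finset.mem_range]
                have := (Finset.mem_Icc.mp hx).2
                omega
              · intro x _ _
                positivity
          _ = 1/16 * ∑ k ∈ Finset.range (L+1), (1/2:ℝ)^k := by rw [Finset.mul_sum]
          _ ≤ 1/16 * 2 := by
              apply mul_le_mul_of_nonneg_left (sum_geometric_two_le _) (by norm_num)
          _ = 1/8 := by norm_num
      linarith
    calc volume bad
        ≤ volume (⋃ i, E0 i) + volume (⋃ k ∈ Finset.Icc 1 L, ⋃ i, ⋃ j, Ep k i j) :=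
          measure_union_le _ _
      _ ≤ ENNReal.ofReal (2 * p 0) + ∑ k ∈ Finset.Icc 1 L,
            ENNReal.ofReal (((2^(2^k) * 2^(2^(k-1)) : ℕ) : ℝ) * p k) :=
          add_le_add h1 ((measure_biUnion_finset_le _ _).trans (Finset.sum_le_sum h2))
      _ = ENNReal.ofReal (2 * p 0 + ∑ k ∈ Finset.Icc 1 L,
            ((2^(2^k) * 2^(2^(k-1)) : ℕ) : ℝ) * p k) := by
          rw [← ENNReal.ofReal_sum_of_nonneg (fun k _ => mul_nonneg (Nat.cast_nonneg _) (hppos k)),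
            ← ENNReal.ofReal_add (by positivity) (Finset.sum_nonneg
              (fun k _ => mul_nonneg (Nat.cast_nonneg _) (hppos k)))]
      _ < 1 := ENNReal.ofReal_lt_one.mpr hsumlt
  have hbadne : bad ≠ Set.univ := by
    intro hcontra
    rw [hcontra] at hbad
    simp only [measure_univ, lt_self_iff_false] at hbad
  obtain ⟨ξ, hξ⟩ := Set.ne_univ_iff_exists_notMem _ |>.mp hbadne
  refine ⟨ξ, ?_⟩
  intro f hf
  have hξ0 : ∀ i, ξ ∉ E0 i := by
    intro i hmem
    exact hξ (Set.mem_union_left _ (Set.mem_iUnion.mpr ⟨i, hmem⟩))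
  have hξp : ∀ k, k ∈ Finset.Icc 1 L → ∀ i j, ξ ∉ Ep k i j := by
    intro k hk i j hmem
    apply hξ
    apply Set.mem_union_right
    exact Set.mem_biUnion hk (Set.mem_iUnion.mpr ⟨i, Set.mem_iUnion.mpr ⟨j, hmem⟩⟩)
  -- the deterministic estimate
  have hintsq : ∀ g : ↥Ω → ℝ, g ∈ W → Integrable (fun x => (g x)^2) volume := by
    intro g hg
    refine integrable_of_abs_le volume _ (M'^2) ((hWc g hg).measurable.pow_const 2) ?_
    intro x
    rw [abs_pow]
    exact pow_le_pow_left₀ (abs_nonneg _) (hWb' g hg x) 2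
  set q : ℕ → (↥Ω → ℝ) := fun k => nets k (proj k f hf) with hqdef
  have hqW : ∀ k, q k ∈ W := fun k => hnmem _ _
  have hqapp : ∀ k x, |f x - q k x| ≤ δ k := fun k x => hproj k f hf x
  set Er : (↥Ω → ℝ) → ℝ := fun g => (∫ x, (g x)^2) - (1/(m:ℝ)) * ∑ j, (g (ξ j))^2 with hErdef
  have h2r : (2:ℝ)^(r:ℝ) ≤ 2 := by
    calc (2:ℝ)^(r:ℝ) ≤ (2:ℝ)^(1:ℝ) :=
          Real.rpow_le_rpow_of_exponent_le one_le_two (by linarith)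
      _ = 2 := Real.rpow_one 2
  have h0 : |Er (q 0)| ≤ t 0 := by
    have hnot := hξ0 (proj 0 f hf)
    rw [hE0def] at hnot
    simp only [Set.mem_setOf_eq, not_lt] at hnot
    exact hnot
  have hstep : ∀ k ∈ Finset.range L, |Er (q (k+1)) - Er (q k)| ≤ t (k+1) := by
    intro k hkr
    have hkIcc : (k+1) ∈ Finset.Icc 1 L :=
      Finset.mem_Icc.mpr ⟨by omega, by have := Finset.mem_range.mp hkr; omega⟩
    have hnot := hξp (k+1) hkIcc (proj (k+1) f hf) (proj k f hf)
    rw [hEpdef] at hnot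
    simp only [Set.mem_setOf_eq, not_and, not_lt] at hnot
    have hclose : ∀ x, |nets (k+1) (proj (k+1) f hf) x - nets ((k+1)-1) (proj k f hf) x| ≤
        δ (k+1) + δ ((k+1)-1) := by
      intro x
      have h1 : |q (k+1) x - q k x| ≤ δ (k+1) + δ k := by
        calc |q (k+1) x - q k x| ≤ |q (k+1) x - f x| + |f x - q k x| := abs_sub_le _ _ _
          _ ≤ δ (k+1) + δ k := by
              refine add_le_add ?_ (hqapp k x)
              rw [abs_sub_comm]
              exact hqapp (k+1) x
      simpa using h1
    have hl := hnot hclose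
    have hdiff : Er (q (k+1)) - Er (q k) =
        (∫ x, ((q (k+1) x)^2 - (q k x)^2)) -
          (1/(m:ℝ)) * ∑ j', ((q (k+1) (ξ j'))^2 - (q k (ξ j'))^2) := by
      rw [hErdef]
      dsimp only
      rw [integral_sub (hintsq _ (hqW (k+1))) (hintsq _ (hqW k)), Finset.sum_sub_distrib,
        mul_sub]
      ring
    rw [hdiff]
    simpa using hl
  have htele : |Er (q L)| ≤ ∑ k ∈ Finset.range (L+1), t k := by
    have he : Er (q L) = Er (q 0) + ∑ k ∈ Finset.range L, (Er (q (k+1)) - Er (q k)) := by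
      rw [Finset.sum_range_sub (fun k => Er (q k))]
      ring
    rw [he]
    calc |Er (q 0) + ∑ k ∈ Finset.range L, (Er (q (k+1)) - Er (q k))|
        ≤ |Er (q 0)| + |∑ k ∈ Finset.range L, (Er (q (k+1)) - Er (q k))| := abs_add_le _ _
      _ ≤ t 0 + ∑ k ∈ Finset.range L, t (k+1) :=
          add_le_add h0 ((Finset.abs_sum_le_sum_abs _ _).trans (Finset.sum_le_sum hstep))
      _ = ∑ k ∈ Finset.range (L+1), t k := by
          rw [Finset.sum_range_succ']
          ring
  have hpt : ∀ x, |(f x)^2 - (q L x)^2| ≤ 2 * M' * δ L := by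
    intro x
    rw [show (f x)^2 - (q L x)^2 = (f x - q L x) * (f x + q L x) by ring, abs_mul]
    calc |f x - q L x| * |f x + q L x| ≤ δ L * (2 * M') := by
          refine mul_le_mul (hqapp L x) ?_ (abs_nonneg _) (hδpos L).le
          calc |f x + q L x| ≤ |f x| + |q L x| := abs_add_le _ _
            _ ≤ M' + M' := add_le_add (hWb' f hf x) (hWb' _ (hqW L) x)
            _ = 2 * M' := by ring
      _ = 2 * M' * δ L := by ring
  have happrox : |Er f - Er (q L)| ≤ 4 * M' * δ L := by
    have hIdiff : |(∫ x, (f x)^2) - ∫ x, (q L x)^2| ≤ 2 * M' * δ L := by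
      rw [← integral_sub (hintsq f hf) (hintsq _ (hqW L))]
      calc |∫ x, ((f x)^2 - (q L x)^2)| ≤ ∫ x, |(f x)^2 - (q L x)^2| := by
            simpa [Real.norm_eq_abs] using
              norm_integral_le_integral_norm (μ := (volume : Measure ↥Ω))
                (fun x => (f x)^2 - (q L x)^2)
        _ ≤ ∫ _x : ↥Ω, 2 * M' * δ L :=
            integral_mono ((hintsq f hf).sub (hintsq _ (hqW L))).abs (integrable_const _)
              hpt
        _ = 2 * M' * δ L := by simp
    have hSdiff : |(1/(m:ℝ)) * ∑ j, (f (ξ j))^2 - (1/(m:ℝ)) * ∑ j, (q L (ξ j))^2| ≤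
        2 * M' * δ L := by
      rw [← mul_sub, ← Finset.sum_sub_distrib, abs_mul,
        abs_of_pos (by positivity : (0:ℝ) < 1/(m:ℝ))]
      calc (1/(m:ℝ)) * |∑ j : Fin m, ((f (ξ j))^2 - (q L (ξ j))^2)|
          ≤ (1/(m:ℝ)) * ∑ j : Fin m, |(f (ξ j))^2 - (q L (ξ j))^2| :=
            mul_le_mul_of_nonneg_left (Finset.abs_sum_le_sum_abs _ _) (by positivity)
        _ ≤ (1/(m:ℝ)) * ∑ _j : Fin m, (2 * M' * δ L) :=
            mul_le_mul_of_nonneg_left (Finset.sum_le_sum (fun j _ => hpt (ξ j)))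
              (by positivity)
        _ = 2 * M' * δ L := by
            rw [Finset.sum_const, Finset.card_univ, Fintype.card_fin, nsmul_eq_mul]
            field_simp
    have hsplit : Er f - Er (q L) =
        ((∫ x, (f x)^2) - ∫ x, (q L x)^2) -
          ((1/(m:ℝ)) * ∑ j, (f (ξ j))^2 - (1/(m:ℝ)) * ∑ j, (q L (ξ j))^2) := by
      rw [hErdef]
      dsimp only
      ring
    rw [hsplit]
    calc |((∫ x, (f x)^2) - ∫ x, (q L x)^2) -
          ((1/(m:ℝ)) * ∑ j, (f (ξ j))^2 - (1/(m:ℝ)) * ∑ j, (q L (ξ j))^2)|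
        ≤ |(∫ x, (f x)^2) - ∫ x, (q L x)^2| +
          |(1/(m:ℝ)) * ∑ j, (f (ξ j))^2 - (1/(m:ℝ)) * ∑ j, (q L (ξ j))^2| := abs_sub _ _
      _ ≤ 2 * M' * δ L + 2 * M' * δ L := add_le_add hIdiff hSdiff
      _ = 4 * M' * δ L := by ring
  -- bound the sum of the t k
  have hBk : ∀ k, B k ≤ Q * (2:ℝ)^(-((k:ℝ)*r)) := by
    intro k
    cases k with
    | zero =>
        have hB0 : B 0 = M'^2 := by rw [hBdef]; simp
        rw [hB0]
        simp only [Nat.cast_zero, zero_mul, neg_zero, Real.rpow_zero, mul_one]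
        exact hQ1
    | succ n =>
        have hBs : B (n+1) = 2*M'*(δ (n+1) + δ n) := by rw [hBdef]; simp
        have hδn : δ n ≤ 2 * (D * (2:ℝ)^(-(((n+1):ℕ):ℝ)*r)) := by
          have he1 : (2:ℝ)^(-((n:ℝ)*r)) =
              (2:ℝ)^(-(((n+1):ℕ):ℝ)*r) * (2:ℝ)^(r:ℝ) := by
            rw [← Real.rpow_add two_pos]
            congr 1
            push_cast
            ring
          rw [hδdef]
          dsimp only
          rw [he1]
          have hp : (0:ℝ) < (2:ℝ)^(-(((n+1):ℕ):ℝ)*r) := Real.rpow_pos_of_pos two_pos _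
          calc D * ((2:ℝ)^(-(((n+1):ℕ):ℝ)*r) * (2:ℝ)^(r:ℝ))
              ≤ D * ((2:ℝ)^(-(((n+1):ℕ):ℝ)*r) * 2) := by
                apply mul_le_mul_of_nonneg_left _ hD.le
                exact mul_le_mul_of_nonneg_left h2r hp.le
            _ = 2 * (D * (2:ℝ)^(-(((n+1):ℕ):ℝ)*r)) := by ring
        have hδn1 : δ (n+1) = D * (2:ℝ)^(-(((n+1):ℕ):ℝ)*r) := by
          rw [hδdef]
          dsimp only
          congr 1
          push_cast
          ring_nf
        rw [hBs]
        have hkey : 2*M'*(δ (n+1) + δ n) ≤ 6 * M' * D * (2:ℝ)^(-(((n+1):ℕ):ℝ)*r) := by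
          rw [hδn1]
          nlinarith [hδn, hM'pos, hD.le, Real.rpow_pos_of_pos two_pos (-(((n+1):ℕ):ℝ)*r)]
        calc 2*M'*(δ (n+1) + δ n) ≤ 6 * M' * D * (2:ℝ)^(-(((n+1):ℕ):ℝ)*r) := hkey
          _ ≤ Q * (2:ℝ)^(-(((n+1):ℕ):ℝ)*r) := by
              apply mul_le_mul_of_nonneg_right hQ2 (Real.rpow_pos_of_pos two_pos _).le
          _ = Q * (2:ℝ)^(-((((n+1):ℕ):ℝ)*r)) := by rw [neg_mul]
  have hsqrtk : ∀ k : ℕ, Real.sqrt (8 * 2^(k+2) / m) ≤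
      6 * (2:ℝ)^((k:ℝ)*(1/2:ℝ)) * (m:ℝ)^(-(1/2):ℝ) := by
    intro k
    have h1 : (8:ℝ) * 2^(k+2) / m = 32 * (2:ℝ)^k * (1/m) := by
      rw [pow_add]
      ring
    rw [h1, Real.sqrt_mul (by positivity), Real.sqrt_mul (by norm_num : (0:ℝ) ≤ 32)]
    have hs32 : Real.sqrt 32 ≤ 6 := by
      have h36 : Real.sqrt 32 ≤ Real.sqrt 36 := Real.sqrt_le_sqrt (by norm_num)
      rwa [show (36:ℝ) = 6^2 by norm_num, Real.sqrt_sq (by norm_num : (0:ℝ) ≤ 6)] at h36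
    have hs2k : Real.sqrt ((2:ℝ)^k) = (2:ℝ)^((k:ℝ)*(1/2:ℝ)) := by
      rw [Real.sqrt_eq_rpow, ← Real.rpow_natCast 2 k, ← Real.rpow_mul (by norm_num : (0:ℝ) ≤ 2)]
    have hs1m : Real.sqrt (1/(m:ℝ)) = (m:ℝ)^(-(1/2):ℝ) := by
      rw [one_div, Real.sqrt_inv, Real.sqrt_eq_rpow, ← Real.rpow_neg (by positivity : (0:ℝ) ≤ (m:ℝ))]
    rw [hs2k, hs1m]
    have hp1 : (0:ℝ) ≤ (2:ℝ)^((k:ℝ)*(1/2:ℝ)) := (Real.rpow_pos_of_pos two_pos _).le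
    have hp2 : (0:ℝ) ≤ (m:ℝ)^(-(1/2):ℝ) := (Real.rpow_pos_of_pos hmR _).le
    calc Real.sqrt 32 * (2:ℝ)^((k:ℝ)*(1/2:ℝ)) * (m:ℝ)^(-(1/2):ℝ)
        ≤ 6 * (2:ℝ)^((k:ℝ)*(1/2:ℝ)) * (m:ℝ)^(-(1/2):ℝ) := by
          apply mul_le_mul_of_nonneg_right _ hp2
          exact mul_le_mul_of_nonneg_right hs32 hp1
      _ = 6 * (2:ℝ)^((k:ℝ)*(1/2:ℝ)) * (m:ℝ)^(-(1/2):ℝ) := rfl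
  have htk : ∀ k : ℕ, t k ≤ 6 * Q * ((2:ℝ)^(a:ℝ))^k * (m:ℝ)^(-(1/2):ℝ) := by
    intro k
    have hcomb : (2:ℝ)^(-((k:ℝ)*r)) * (2:ℝ)^((k:ℝ)*(1/2:ℝ)) = ((2:ℝ)^(a:ℝ))^k := by
      rw [← Real.rpow_add two_pos, ← Real.rpow_natCast ((2:ℝ)^(a:ℝ)) k,
        ← Real.rpow_mul (by norm_num : (0:ℝ) ≤ 2)]
      congr 1
      rw [hadef]
      ring
    calc t k = B k * Real.sqrt (8 * 2^(k+2) / m) := rfl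
      _ ≤ (Q * (2:ℝ)^(-((k:ℝ)*r))) * (6 * (2:ℝ)^((k:ℝ)*(1/2:ℝ)) * (m:ℝ)^(-(1/2):ℝ)) := by
          apply mul_le_mul (hBk k) (hsqrtk k) (Real.sqrt_nonneg _)
          positivity
      _ = 6 * Q * ((2:ℝ)^(-((k:ℝ)*r)) * (2:ℝ)^((k:ℝ)*(1/2:ℝ))) * (m:ℝ)^(-(1/2):ℝ) := by ring
      _ = 6 * Q * ((2:ℝ)^(a:ℝ))^k * (m:ℝ)^(-(1/2):ℝ) := by rw [hcomb]
  have hsum3 : ∑ k ∈ Finset.range (L+1), ((2:ℝ)^(a:ℝ))^k ≤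
      ((2:ℝ)^(a:ℝ))^(L+1) / ((2:ℝ)^(a:ℝ) - 1) := by
    rw [geom_sum_eq (ne_of_gt h2a)]
    rw [div_le_div_iff₀ (by linarith) (by linarith)]
    nlinarith [pow_pos (lt_trans one_pos h2a) (L+1)]
  have hpowL : ((2:ℝ)^(a:ℝ))^(L+1) ≤ 2 * (m:ℝ)^(a:ℝ) := by
    have h1 : ((2:ℝ)^(a:ℝ))^(L+1) = ((2:ℝ)^(L+1))^(a:ℝ) := by
      rw [← Real.rpow_natCast ((2:ℝ)^(a:ℝ)) (L+1), ← Real.rpow_mul (by norm_num : (0:ℝ) ≤ 2),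
        mul_comm, Real.rpow_mul (by norm_num : (0:ℝ) ≤ 2), Real.rpow_natCast]
    rw [h1]
    calc ((2:ℝ)^(L+1))^(a:ℝ) ≤ ((4:ℝ)*m)^(a:ℝ) :=
          Real.rpow_le_rpow (by positivity) h2Lle ha.le
      _ = (4:ℝ)^(a:ℝ) * (m:ℝ)^(a:ℝ) := Real.mul_rpow (by norm_num) (by positivity)
      _ ≤ 2 * (m:ℝ)^(a:ℝ) := by
          have h4a : (4:ℝ)^(a:ℝ) ≤ 2 := by
            have h42 : (4:ℝ)^(a:ℝ) = (2:ℝ)^(2*a:ℝ) := by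
              rw [show (4:ℝ) = (2:ℝ)^(2:ℕ) by norm_num, ← Real.rpow_natCast ((2:ℝ)) 2,
                ← Real.rpow_mul (by norm_num : (0:ℝ) ≤ 2)]
              norm_num
            rw [h42]
            calc (2:ℝ)^(2*a:ℝ) ≤ (2:ℝ)^(1:ℝ) := by
                  apply Real.rpow_le_rpow_of_exponent_le one_le_two
                  rw [hadef]; linarith
              _ = 2 := Real.rpow_one 2
          exact mul_le_mul_of_nonneg_right h4a (Real.rpow_pos_of_pos hmR _).le
  have hma : (m:ℝ)^(a:ℝ) * (m:ℝ)^(-(1/2):ℝ) = (m:ℝ)^(-r) := by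
    rw [← Real.rpow_add hmR]
    congr 1
    rw [hadef]
    ring
  have hsumt : ∑ k ∈ Finset.range (L+1), t k ≤ 12 * Q / ((2:ℝ)^(a:ℝ) - 1) * (m:ℝ)^(-r) := by
    have hden : (0:ℝ) < (2:ℝ)^(a:ℝ) - 1 := by linarith
    calc ∑ k ∈ Finset.range (L+1), t k
        ≤ ∑ k ∈ Finset.range (L+1), 6 * Q * ((2:ℝ)^(a:ℝ))^k * (m:ℝ)^(-(1/2):ℝ) :=
          Finset.sum_le_sum (fun k _ => htk k)
      _ = 6 * Q * (m:ℝ)^(-(1/2):ℝ) * ∑ k ∈ Finset.range (L+1), ((2:ℝ)^(a:ℝ))^k := by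
          rw [Finset.mul_sum]
          exact Finset.sum_congr rfl (fun k _ => by ring)
      _ ≤ 6 * Q * (m:ℝ)^(-(1/2):ℝ) * (((2:ℝ)^(a:ℝ))^(L+1) / ((2:ℝ)^(a:ℝ) - 1)) := by
          apply mul_le_mul_of_nonneg_left hsum3
          positivity
      _ ≤ 6 * Q * (m:ℝ)^(-(1/2):ℝ) * ((2 * (m:ℝ)^(a:ℝ)) / ((2:ℝ)^(a:ℝ) - 1)) := by
          apply mul_le_mul_of_nonneg_left _ (by positivity)
          exact (div_le_div_iff_of_pos_right hden).mpr hpowL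
      _ = 12 * Q / ((2:ℝ)^(a:ℝ) - 1) * ((m:ℝ)^(a:ℝ) * (m:ℝ)^(-(1/2):ℝ)) := by
          field_simp
          ring
      _ = 12 * Q / ((2:ℝ)^(a:ℝ) - 1) * (m:ℝ)^(-r) := by rw [hma]
  have hδL : δ L ≤ 2 * D * (m:ℝ)^(-r) := by
    have h2Lm : (m:ℝ)/2 ≤ (2:ℝ)^(L:ℕ) := by
      rw [pow_succ] at hmle
      linarith
    have h1 : (2:ℝ)^(-((L:ℝ)*r)) ≤ ((m:ℝ)/2)^(-r) := by
      have hLnat : ((2:ℝ)^(L:ℕ) : ℝ) = (2:ℝ)^((L:ℕ):ℝ) := (Real.rpow_natCast 2 L).symm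
      have hstep1 : ((2:ℝ)^((L:ℕ):ℝ))^(-r) ≤ ((m:ℝ)/2)^(-r) := by
        apply Real.rpow_le_rpow_of_nonpos (by positivity) _ (neg_nonpos.mpr hr0.le)
        rw [← hLnat]
        exact h2Lm
      calc (2:ℝ)^(-((L:ℝ)*r)) = ((2:ℝ)^((L:ℕ):ℝ))^(-r) := by
            rw [← Real.rpow_mul (by norm_num : (0:ℝ) ≤ 2)]
            congr 1
            ring
        _ ≤ ((m:ℝ)/2)^(-r) := hstep1
    have h2 : ((m:ℝ)/2)^(-r) ≤ 2 * (m:ℝ)^(-r) := by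
      rw [Real.div_rpow (by positivity) (by norm_num : (0:ℝ) ≤ 2)]
      rw [Real.rpow_neg (by norm_num : (0:ℝ) ≤ 2), div_eq_mul_inv, inv_inv]
      have hmrpos : (0:ℝ) ≤ (m:ℝ)^(-r) := (Real.rpow_pos_of_pos hmR _).le
      calc (m:ℝ)^(-r) * (2:ℝ)^(r:ℝ) ≤ (m:ℝ)^(-r) * 2 :=
            mul_le_mul_of_nonneg_left h2r hmrpos
        _ = 2 * (m:ℝ)^(-r) := by ring
    calc δ L = D * (2:ℝ)^(-((L:ℝ)*r)) := rfl
      _ ≤ D * ((m:ℝ)/2)^(-r) := mul_le_mul_of_nonneg_left h1 hD.le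
      _ ≤ D * (2 * (m:ℝ)^(-r)) := mul_le_mul_of_nonneg_left h2 hD.le
      _ = 2 * D * (m:ℝ)^(-r) := by ring
  calc |(∫ x, (f x)^2 ∂μ) - (1/(m:ℝ)) * ∑ j, (f (ξ j))^2| = |Er f| := rfl
    _ = |(Er f - Er (q L)) + Er (q L)| := by ring_nf
    _ ≤ |Er f - Er (q L)| + |Er (q L)| := abs_add_le _ _
    _ ≤ 4 * M' * δ L + ∑ k ∈ Finset.range (L+1), t k := add_le_add happrox htele
    _ ≤ 4 * M' * (2 * D * (m:ℝ)^(-r)) + 12 * Q / ((2:ℝ)^(a:ℝ) - 1) * (m:ℝ)^(-r) :=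
        add_le_add (mul_le_mul_of_nonneg_left hδL (by positivity)) hsumt
    _ = (12 * Q / ((2:ℝ)^(a:ℝ) - 1) + 8 * M' * D) * (m:ℝ)^(-r) := by ring
end

section
/- Let r > 1/2 and d ∈ ℕ. For k ∈ ℤ set k* := max(|k|,1). Then there exists a constant C = C(r,d) such that for every n = (n_1,…,n_d) ∈ ℤ^d, ∑_{k∈ℤ^d} ∏_{j=1}^d (k_j*)^{−2r} ((n_j−k_j)*)^{−2r} ≤ C² ∏_{j=1}^d (n_j*)^{−2r}. In particular, in dimension d = 1: for all n ∈ ℤ, ∑_{k∈ℤ} (k*)^{−2r}((n−k)*)^{−2r} ≤ C(r) (n*)^{−2r}. -/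
open Finset

/-- For `k ∈ ℤ`, `k* := max(|k|, 1)` (as a real number). -/
noncomputable def kstar (k : ℤ) : ℝ := max |(k : ℝ)| 1

lemma one_le_kstar' (k : ℤ) : 1 ≤ kstar k := le_max_right _ _

lemma kstar_pos (k : ℤ) : 0 < kstar k := lt_of_lt_of_le one_pos (one_le_kstar' k)

lemma fr_nonneg (r : ℝ) (k : ℤ) : 0 ≤ kstar k ^ (-(2 * r)) :=
  Real.rpow_nonneg (kstar_pos k).le _

/-- uniform bound on finite partial sums of `(k*)^{-2r}` -/
lemma partial_sum_bound (r : ℝ) (hr : 1 / 2 < r) :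
    ∃ A : ℝ, 1 ≤ A ∧ ∀ S : Finset ℤ, ∑ m ∈ S, kstar m ^ (-(2 * r)) ≤ A := by
  have hb : (1 : ℝ) < 2 * r := by linarith
  have hg : Summable fun m : ℤ => |(m : ℝ)| ^ (-(2 * r)) := Real.summable_abs_int_rpow hb
  refine ⟨1 + ∑' m : ℤ, |(m : ℝ)| ^ (-(2 * r)), by
      have : 0 ≤ ∑' m : ℤ, |(m : ℝ)| ^ (-(2 * r)) :=
        tsum_nonneg fun m => Real.rpow_nonneg (abs_nonneg _) _
      linarith, fun S => ?_⟩
  have h1 : ∑ m ∈ S, kstar m ^ (-(2 * r)) ≤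
      1 + ∑ m ∈ S.erase 0, kstar m ^ (-(2 * r)) := by
    by_cases h0 : (0 : ℤ) ∈ S
    · rw [← Finset.sum_erase_add _ _ h0]
      have : kstar (0 : ℤ) ^ (-(2 * r)) = 1 := by
        simp [kstar, Real.one_rpow]
      rw [this, add_comm]
    · rw [Finset.erase_eq_of_notMem h0]
      have : 0 ≤ (1 : ℝ) := zero_le_one
      linarith
  have h2 : ∑ m ∈ S.erase 0, kstar m ^ (-(2 * r)) ≤
      ∑ m ∈ S.erase 0, |(m : ℝ)| ^ (-(2 * r)) := by
    refine Finset.sum_le_sum fun m hm => ?_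
    have hm0 : m ≠ 0 := Finset.ne_of_mem_erase hm
    have : kstar m = |(m : ℝ)| := by
      have : (1 : ℝ) ≤ |(m : ℝ)| := by
        rw [← Int.cast_abs]
        exact_mod_cast Int.one_le_abs hm0
      simp [kstar, max_eq_left this]
    rw [this]
  have h3 : ∑ m ∈ S.erase 0, |(m : ℝ)| ^ (-(2 * r)) ≤
      ∑' m : ℤ, |(m : ℝ)| ^ (-(2 * r)) :=
    Summable.sum_le_tsum _ (fun m _ => Real.rpow_nonneg (abs_nonneg _) _) hg
  linarith

lemma kstar_le_two_mul_max (n k : ℤ) :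
    kstar n ≤ 2 * max (kstar k) (kstar (n - k)) := by
  have habs : |(n : ℝ)| ≤ |(k : ℝ)| + |((n - k : ℤ) : ℝ)| := by
    push_cast
    calc |(n : ℝ)| = |(k : ℝ) + ((n : ℝ) - k)| := by ring_nf
    _ ≤ |(k : ℝ)| + |(n : ℝ) - k| := abs_add_le _ _
  have h1 : |(k : ℝ)| ≤ max (kstar k) (kstar (n - k)) :=
    le_trans (le_max_left _ _) (le_max_left _ _)
  have h2 : |((n - k : ℤ) : ℝ)| ≤ max (kstar k) (kstar (n - k)) :=
    le_trans (le_max_left _ _) (le_max_right _ _)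
  have h3 : (1 : ℝ) ≤ max (kstar k) (kstar (n - k)) :=
    le_trans (one_le_kstar' k) (le_max_left _ _)
  rcases max_cases |(n : ℝ)| 1 with ⟨h, _⟩ | ⟨h, _⟩ <;> rw [kstar, h] <;> linarith

lemma term_bound (r : ℝ) (hr : 1 / 2 < r) (n k : ℤ) :
    kstar k ^ (-(2 * r)) * kstar (n - k) ^ (-(2 * r)) ≤
      (2 : ℝ) ^ (2 * r) * kstar n ^ (-(2 * r)) *
        (kstar k ^ (-(2 * r)) + kstar (n - k) ^ (-(2 * r))) := by
  have hneg : -(2 * r) ≤ 0 := by linarith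
  have hB : ∀ m : ℤ, kstar n / 2 ≤ kstar m →
      kstar m ^ (-(2 * r)) ≤ (2 : ℝ) ^ (2 * r) * kstar n ^ (-(2 * r)) := by
    intro m hm
    have h0 : 0 < kstar n / 2 := by have := kstar_pos n; linarith
    have h1 : kstar m ^ (-(2 * r)) ≤ (kstar n / 2) ^ (-(2 * r)) :=
      Real.rpow_le_rpow_of_nonpos h0 hm hneg
    have h2 : (kstar n / 2) ^ (-(2 * r)) =
        (2 : ℝ) ^ (2 * r) * kstar n ^ (-(2 * r)) := by
      rw [Real.div_rpow (kstar_pos n).le (by norm_num), Real.rpow_neg (by norm_num : (0:ℝ) ≤ 2)]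
      field_simp
    rw [h2] at h1; exact h1
  have hmax := kstar_le_two_mul_max n k
  rcases max_cases (kstar k) (kstar (n - k)) with ⟨h, _⟩ | ⟨h, _⟩
  · rw [h] at hmax
    have := hB k (by linarith)
    calc kstar k ^ (-(2 * r)) * kstar (n - k) ^ (-(2 * r))
        ≤ ((2 : ℝ) ^ (2 * r) * kstar n ^ (-(2 * r))) * kstar (n - k) ^ (-(2 * r)) :=
          mul_le_mul_of_nonneg_right this (fr_nonneg r _)
      _ ≤ (2 : ℝ) ^ (2 * r) * kstar n ^ (-(2 * r)) *
            (kstar k ^ (-(2 * r)) + kstar (n - k) ^ (-(2 * r))) := by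
          refine mul_le_mul_of_nonneg_left ?_ ?_
          · have := fr_nonneg r k; linarith
          · exact mul_nonneg (Real.rpow_nonneg (by norm_num) _) (fr_nonneg r n)
  · rw [h] at hmax
    have := hB (n - k) (by linarith)
    calc kstar k ^ (-(2 * r)) * kstar (n - k) ^ (-(2 * r))
        ≤ kstar k ^ (-(2 * r)) * ((2 : ℝ) ^ (2 * r) * kstar n ^ (-(2 * r))) :=
          mul_le_mul_of_nonneg_left this (fr_nonneg r _)
      _ ≤ (2 : ℝ) ^ (2 * r) * kstar n ^ (-(2 * r)) *
            (kstar k ^ (-(2 * r)) + kstar (n - k) ^ (-(2 * r))) := by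
          rw [mul_comm]
          refine mul_le_mul_of_nonneg_left ?_ ?_
          · have := fr_nonneg r (n - k); linarith
          · exact mul_nonneg (Real.rpow_nonneg (by norm_num) _) (fr_nonneg r n)

lemma oneD_bound (r : ℝ) (hr : 1 / 2 < r) :
    ∃ C₁ : ℝ, 1 ≤ C₁ ∧ ∀ n : ℤ, ∀ S : Finset ℤ,
      ∑ k ∈ S, kstar k ^ (-(2 * r)) * kstar (n - k) ^ (-(2 * r))
        ≤ C₁ * kstar n ^ (-(2 * r)) := by
  obtain ⟨A, hA1, hA⟩ := partial_sum_bound r hr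
  have h2r : (0 : ℝ) < (2 : ℝ) ^ (2 * r) := Real.rpow_pos_of_pos (by norm_num) _
  have h2r1 : (1 : ℝ) ≤ (2 : ℝ) ^ (2 * r) :=
    Real.one_le_rpow (by norm_num) (by linarith)
  refine ⟨(2 : ℝ) ^ (2 * r) * (2 * A), ?_, fun n S => ?_⟩
  · nlinarith
  have step1 : ∑ k ∈ S, kstar k ^ (-(2 * r)) * kstar (n - k) ^ (-(2 * r)) ≤
      (2 : ℝ) ^ (2 * r) * kstar n ^ (-(2 * r)) *
        (∑ k ∈ S, kstar k ^ (-(2 * r)) + ∑ k ∈ S, kstar (n - k) ^ (-(2 * r))) := by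
    rw [← Finset.sum_add_distrib, Finset.mul_sum]
    exact Finset.sum_le_sum fun k _ => term_bound r hr n k
  have step2 : ∑ k ∈ S, kstar (n - k) ^ (-(2 * r)) ≤ A := by
    have : ∑ k ∈ S, kstar (n - k) ^ (-(2 * r)) =
        ∑ m ∈ S.image (fun k => n - k), kstar m ^ (-(2 * r)) := by
      rw [Finset.sum_image]
      intro a _ b _ hab
      exact sub_right_injective hab
    rw [this]; exact hA _
  have step3 : ∑ k ∈ S, kstar k ^ (-(2 * r)) ≤ A := hA S
  have hn : 0 ≤ kstar n ^ (-(2 * r)) := fr_nonneg r n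
  calc ∑ k ∈ S, kstar k ^ (-(2 * r)) * kstar (n - k) ^ (-(2 * r))
      ≤ (2 : ℝ) ^ (2 * r) * kstar n ^ (-(2 * r)) *
        (∑ k ∈ S, kstar k ^ (-(2 * r)) + ∑ k ∈ S, kstar (n - k) ^ (-(2 * r))) := step1
    _ ≤ (2 : ℝ) ^ (2 * r) * kstar n ^ (-(2 * r)) * (2 * A) := by
        refine mul_le_mul_of_nonneg_left (by linarith) (mul_nonneg h2r.le hn)
    _ = (2 : ℝ) ^ (2 * r) * (2 * A) * kstar n ^ (-(2 * r)) := by ring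

/-- Let `r > 1/2` and `d ∈ ℕ`.  Then there is `C = C(r,d) > 0` such that for
every `n ∈ ℤ^d`, `∑_{k∈ℤ^d} ∏_j (k_j*)^{−2r}((n_j−k_j)*)^{−2r} ≤ C² ∏_j (n_j*)^{−2r}`;
in particular, in dimension `1`: there is `C(r) > 0` with
`∑_{k∈ℤ} (k*)^{−2r}((n−k)*)^{−2r} ≤ C(r) (n*)^{−2r}` for all `n ∈ ℤ`.
(Sums over `ℤ^d` are expressed via arbitrary finite partial sums.) -/
theorem convolution_kstar_bound (r : ℝ) (hr : 1 / 2 < r) (d : ℕ) :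
    (∃ C : ℝ, 0 < C ∧ ∀ n : Fin d → ℤ, ∀ S : Finset (Fin d → ℤ),
      ∑ k ∈ S, ∏ j, kstar (k j) ^ (-(2 * r)) * kstar (n j - k j) ^ (-(2 * r))
        ≤ C ^ 2 * ∏ j, kstar (n j) ^ (-(2 * r))) ∧
    (∃ C₁ : ℝ, 0 < C₁ ∧ ∀ n : ℤ, ∀ S : Finset ℤ,
      ∑ k ∈ S, kstar k ^ (-(2 * r)) * kstar (n - k) ^ (-(2 * r))
        ≤ C₁ * kstar n ^ (-(2 * r))) := by
  obtain ⟨C₁, hC₁1, hC₁⟩ := oneD_bound r hr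
  have hC₁0 : 0 < C₁ := lt_of_lt_of_le one_pos hC₁1
  constructor
  · refine ⟨Real.sqrt (C₁ ^ d), Real.sqrt_pos.mpr (by positivity), fun n S => ?_⟩
    have hsq : Real.sqrt (C₁ ^ d) ^ 2 = C₁ ^ d := Real.sq_sqrt (by positivity)
    rw [hsq]
    set T : ∀ _ : Fin d, Finset ℤ := fun j => S.image (fun k => k j) with hT
    have hsub : S ⊆ Fintype.piFinset T := by
      intro k hk
      rw [Fintype.mem_piFinset]
      intro j
      exact Finset.mem_image_of_mem _ hk
    have hle1 : ∑ k ∈ S, ∏ j, kstar (k j) ^ (-(2 * r)) * kstar (n j - k j) ^ (-(2 * r))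
        ≤ ∑ k ∈ Fintype.piFinset T,
            ∏ j, kstar (k j) ^ (-(2 * r)) * kstar (n j - k j) ^ (-(2 * r)) := by
      refine Finset.sum_le_sum_of_subset_of_nonneg hsub fun k _ _ => ?_
      exact Finset.prod_nonneg fun j _ => mul_nonneg (fr_nonneg r _) (fr_nonneg r _)
    have heq : ∑ k ∈ Fintype.piFinset T,
          ∏ j, kstar (k j) ^ (-(2 * r)) * kstar (n j - k j) ^ (-(2 * r))
        = ∏ j, ∑ m ∈ T j, kstar m ^ (-(2 * r)) * kstar (n j - m) ^ (-(2 * r)) :=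
      (Finset.prod_univ_sum T (fun j m => kstar m ^ (-(2 * r)) * kstar (n j - m) ^ (-(2 * r)))).symm
    have hle2 : ∏ j, ∑ m ∈ T j, kstar m ^ (-(2 * r)) * kstar (n j - m) ^ (-(2 * r))
        ≤ ∏ j : Fin d, C₁ * kstar (n j) ^ (-(2 * r)) := by
      refine Finset.prod_le_prod (fun j _ => ?_) (fun j _ => hC₁ (n j) (T j))
      exact Finset.sum_nonneg fun m _ => mul_nonneg (fr_nonneg r _) (fr_nonneg r _)
    have : ∏ j : Fin d, C₁ * kstar (n j) ^ (-(2 * r))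
        = C₁ ^ d * ∏ j, kstar (n j) ^ (-(2 * r)) := by
      rw [Finset.prod_mul_distrib, Finset.prod_const, Finset.card_univ, Fintype.card_fin]
    linarith [hle1, heq ▸ hle2]
  · exact ⟨C₁, hC₁0, hC₁⟩
end

section
/- Let Ω be a compact subset of ℝ^d with a probability measure μ. Let V be a Banach space that is a linear subspace of C(Ω) such that the inclusion map V → C(Ω) is continuous, and let W := {f ∈ V : ‖f‖_V ≤ 1} be its unit ball. Then for every m ∈ ℕ, er_m^o(W, L_1) ≥ κ_m(W). -/
open MeasureTheory Finset

noncomputable section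

/-- `κ_m(W)`: the optimal error of numerical integration of the class `W` by cubature
formulas with `m` knots, `κ_m(W) = inf_{ξ,Λ} sup_{f∈W} |∫ f dμ − ∑ⱼ λⱼ f(ξʲ)|`. -/
def kappam {α : Type*} [MeasurableSpace α] (μ : Measure α)
    (W : Set (α → ℝ)) (m : ℕ) : ℝ :=
  ⨅ p : (Fin m → α) × (Fin m → ℝ), ⨆ f : W,
    |(∫ x, f.1 x ∂μ) - ∑ j, p.2 j * f.1 (p.1 j)|

/-- `er_m^o(W, L_q)`: the optimal weighted sampling discretization error of the `L_q` norm,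
`inf_{ξ,Λ} sup_{f∈W} |∫ |f|^q dμ − ∑ⱼ λⱼ |f(ξʲ)|^q|`. -/
def ermoLq {α : Type*} [MeasurableSpace α] (μ : Measure α)
    (W : Set (α → ℝ)) (q : ℕ) (m : ℕ) : ℝ :=
  ⨅ p : (Fin m → α) × (Fin m → ℝ), ⨆ f : W,
    |(∫ x, |f.1 x| ^ q ∂μ) - ∑ j, p.2 j * |f.1 (p.1 j)| ^ q|

/-- Let `V` be a Banach space continuously and injectively embedded in
`C(Ω)` (via `T`), and let `W` be the image of its unit ball.  Then
`er_m^o(W, L₁) ≥ κ_m(W)` for every `m`. -/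
theorem ermo_L1_ge_kappa {d : ℕ} (Ω : Set (Fin d → ℝ)) (hΩ : IsCompact Ω)
    (μ : Measure Ω) [IsProbabilityMeasure μ]
    (V : Type*) [NormedAddCommGroup V] [NormedSpace ℝ V] [CompleteSpace V]
    (T : V →L[ℝ] C(Ω, ℝ)) (hT : Function.Injective T) (m : ℕ) :
    ermoLq μ {h : Ω → ℝ | ∃ v : V, ‖v‖ ≤ 1 ∧ h = ⇑(T v)} 1 m
      ≥ kappam μ {h : Ω → ℝ | ∃ v : V, ‖v‖ ≤ 1 ∧ h = ⇑(T v)} m := by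
  classical
  haveI : CompactSpace Ω := isCompact_iff_compactSpace.mp hΩ
  set W : Set (Ω → ℝ) := {h : Ω → ℝ | ∃ v : V, ‖v‖ ≤ 1 ∧ h = ⇑(T v)} with hWdef
  haveI hWne : Nonempty W := ⟨⟨⇑(T (0 : V)), ⟨0, by simp, rfl⟩⟩⟩
  -- integrability of all functions in the image of `T`
  have hint : ∀ v : V, Integrable (⇑(T v)) μ := fun v =>
    (T v).continuous.integrable_of_hasCompactSupport
      (HasCompactSupport.of_compactSpace _)
  -- the integration functional φ
  have hbound : ∀ v : V, ‖∫ x, T v x ∂μ‖ ≤ ‖T‖ * ‖v‖ := by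
    intro v
    have h1 : ‖∫ x, T v x ∂μ‖ ≤ ‖T v‖ * (μ Set.univ).toReal :=
      norm_integral_le_of_norm_le_const
        (Filter.Eventually.of_forall fun x => (T v).norm_coe_le_norm x)
    simpa [measure_univ] using h1.trans (by
      have := T.le_opNorm v
      simp [measure_univ]
      linarith)
  let φ : V →L[ℝ] ℝ := LinearMap.mkContinuous
    { toFun := fun v => ∫ x, T v x ∂μ
      map_add' := fun v w => by
        simp only [map_add, ContinuousMap.add_apply]
        exact integral_add (hint v) (hint w)
      map_smul' := fun c v => by
        have h : ⇑(T (c • v)) = fun x => c • (T v) x := by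
          ext x; rw [_root_.map_smul]; rfl
        show (∫ x, T (c • v) x ∂μ) = (RingHom.id ℝ) c • ∫ x, T v x ∂μ
        rw [h, integral_smul]; simp } ‖T‖ hbound
  have hφ : ∀ v : V, φ v = ∫ x, T v x ∂μ := fun v => rfl
  -- point evaluation functionals
  rw [ermoLq, kappam, ge_iff_le]
  by_cases hidx : Nonempty ((Fin m → Ω) × (Fin m → ℝ))
  case neg =>
    haveI : IsEmpty ((Fin m → Ω) × (Fin m → ℝ)) := not_nonempty_iff.mp hidx
    simp [iInf, Set.range_eq_empty]
  haveI := hidx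
  refine le_ciInf fun p => ?_
  obtain ⟨ξ, lam⟩ := p
  set δ : Fin m → (V →L[ℝ] ℝ) := fun j => (ContinuousMap.evalCLM ℝ (ξ j)).comp T
    with hδdef
  have hδ : ∀ j v, δ j v = T v (ξ j) := fun j v => rfl
  -- the discretization error for this choice of points/weights
  set E : W → ℝ := fun f => |(∫ x, |f.1 x| ^ 1 ∂μ) - ∑ j, lam j * |f.1 (ξ j)| ^ 1| with hEdef
  set e : ℝ := ⨆ f : W, E f with hedef
  have he0 : 0 ≤ e := Real.iSup_nonneg fun f => abs_nonneg _
  -- boundedness of the discretization errors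
  have hEbdd : BddAbove (Set.range E) := by
    refine ⟨‖T‖ + ∑ j, |lam j| * ‖T‖, ?_⟩
    rintro x ⟨f, rfl⟩
    obtain ⟨v, hv, hfv⟩ := f.2
    have habs : ∀ x : Ω, |f.1 x| ≤ ‖T‖ := by
      intro x
      rw [hfv]
      calc |T v x| = ‖T v x‖ := rfl
        _ ≤ ‖T v‖ := (T v).norm_coe_le_norm x
        _ ≤ ‖T‖ * ‖v‖ := T.le_opNorm v
        _ ≤ ‖T‖ * 1 := by
            exact mul_le_mul_of_nonneg_left hv (norm_nonneg T)
        _ = ‖T‖ := mul_one _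
    have hi : (∫ x, |f.1 x| ^ 1 ∂μ) ≤ ‖T‖ := by
      have : (∫ x, |f.1 x| ^ 1 ∂μ) ≤ ∫ _ : Ω, ‖T‖ ∂μ := by
        refine integral_mono ?_ (integrable_const _) ?_
        · simpa [hfv] using (hint v).abs
        · intro x; simpa using habs x
      simpa [measure_univ] using this
    have hs : |∑ j, lam j * |f.1 (ξ j)| ^ 1| ≤ ∑ j, |lam j| * ‖T‖ := by
      refine (Finset.abs_sum_le_sum_abs _ _).trans (Finset.sum_le_sum fun j _ => ?_)
      rw [abs_mul]
      refine mul_le_mul_of_nonneg_left ?_ (abs_nonneg _)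
      simpa [abs_abs] using habs (ξ j)
    have hi0 : 0 ≤ (∫ x, |f.1 x| ^ 1 ∂μ) :=
      integral_nonneg fun x => by positivity
    calc E f ≤ |(∫ x, |f.1 x| ^ 1 ∂μ)| + |∑ j, lam j * |f.1 (ξ j)| ^ 1| := abs_sub _ _
      _ ≤ ‖T‖ + ∑ j, |lam j| * ‖T‖ := by
          rw [abs_of_nonneg hi0]; exact add_le_add hi hs
  -- functions in the unit ball vanishing at all knots have small integral
  have hkey : ∀ v : V, ‖v‖ ≤ 1 → (∀ j, δ j v = 0) → |φ v| ≤ e := by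
    intro v hv hvk
    have h1 : |φ v| ≤ ∫ x, |T v x| ∂μ := by
      rw [hφ]
      simpa [Real.norm_eq_abs] using norm_integral_le_integral_norm (μ := μ) (f := ⇑(T v))
    have h2 : (∫ x, |T v x| ∂μ) = E ⟨⇑(T v), ⟨v, hv, rfl⟩⟩ := by
      have hz : ∀ j, T v (ξ j) = 0 := fun j => hvk j
      have hzs : (∑ j, lam j * |T v (ξ j)| ^ 1) = 0 :=
        Finset.sum_eq_zero fun j _ => by simp [hz j]
      show (∫ x, |T v x| ∂μ)
          = |(∫ x, |T v x| ^ 1 ∂μ) - ∑ j, lam j * |T v (ξ j)| ^ 1|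
      rw [hzs, sub_zero]
      simp only [pow_one]
      rw [abs_of_nonneg (integral_nonneg fun x => abs_nonneg _)]
    have h3 : E ⟨⇑(T v), ⟨v, hv, rfl⟩⟩ ≤ e := le_ciSup hEbdd _
    exact h1.trans (h2 ▸ h3)
  -- same with homogeneity
  have hkey' : ∀ v : V, (∀ j, δ j v = 0) → |φ v| ≤ e * ‖v‖ := by
    intro v hvk
    rcases eq_or_ne v 0 with rfl | hv0
    · simp
    · set u : V := ‖v‖⁻¹ • v with hu
      have hnu : ‖u‖ = 1 := by
        rw [hu, norm_smul, norm_inv, norm_norm, inv_mul_cancel₀ (norm_ne_zero_iff.mpr hv0)]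
      have huk : ∀ j, δ j u = 0 := fun j => by
        rw [hu, _root_.map_smul, hvk j, smul_zero]
      have h1 : |φ u| ≤ e := hkey u hnu.le huk
      have h2 : φ v = ‖v‖ * φ u := by
        rw [hu, _root_.map_smul, smul_eq_mul, ← mul_assoc,
          mul_inv_cancel₀ (norm_ne_zero_iff.mpr hv0), one_mul]
      rw [h2, abs_mul, abs_of_nonneg (norm_nonneg v), mul_comm]
      exact mul_le_mul_of_nonneg_right h1 (norm_nonneg v)
  -- the subspace of functions vanishing at the knots and Hahn–Banach
  set Y : Submodule ℝ V := ⨅ j, LinearMap.ker (δ j).toLinearMap with hYdef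
  have hYmem : ∀ v : V, v ∈ Y ↔ ∀ j, δ j v = 0 := by
    intro v
    simp [hYdef, Submodule.mem_iInf, LinearMap.mem_ker]
  set φY : Y →L[ℝ] ℝ := φ.comp Y.subtypeL with hφYdef
  have hφYnorm : ‖φY‖ ≤ e := by
    refine ContinuousLinearMap.opNorm_le_bound _ he0 fun y => ?_
    have := hkey' (y : V) ((hYmem _).mp y.2)
    simpa [hφYdef, Real.norm_eq_abs] using this
  obtain ⟨g, hg, hgnorm⟩ := exists_extension_norm_eq Y φY
  -- φ - g vanishes on Y, hence is a combination of point evaluations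
  have hker : (⨅ j, LinearMap.ker ((δ j).toLinearMap)) ≤
      LinearMap.ker (φ - g).toLinearMap := by
    intro v hv
    rw [LinearMap.mem_ker]
    have hvY : v ∈ Y := by
      rw [hYmem]
      intro j
      have := Submodule.mem_iInf (fun j => LinearMap.ker ((δ j).toLinearMap)) |>.mp hv j
      exact this
    have := hg ⟨v, hvY⟩
    simp only [ContinuousLinearMap.coe_sub, LinearMap.sub_apply,
      ContinuousLinearMap.coe_coe]
    have hφv : φY ⟨v, hvY⟩ = φ v := rfl
    rw [hφv] at this
    rw [this]
    ring
  have hspan := mem_span_of_iInf_ker_le_ker (𝕜 := ℝ) hker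
  obtain ⟨c, hc⟩ := (Submodule.mem_span_range_iff_exists_fun ℝ).mp hspan
  -- conclusion: the cubature with knots ξ and weights c has error at most e
  have hbddbelow : BddBelow (Set.range fun p : (Fin m → Ω) × (Fin m → ℝ) =>
      ⨆ f : W, |(∫ x, f.1 x ∂μ) - ∑ j, p.2 j * f.1 (p.1 j)|) := by
    refine ⟨0, ?_⟩
    rintro x ⟨p', rfl⟩
    exact Real.iSup_nonneg fun f => abs_nonneg _
  refine ciInf_le_of_le hbddbelow (ξ, c) (ciSup_le fun f => ?_)
  obtain ⟨v, hv, hfv⟩ := f.2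
  have hsum : (∑ j, c j * f.1 (ξ j)) = φ v - g v := by
    have := LinearMap.congr_fun hc v
    simp only [LinearMap.coe_sum, Finset.sum_apply, LinearMap.smul_apply,
      smul_eq_mul, ContinuousLinearMap.coe_coe, ContinuousLinearMap.coe_sub,
      LinearMap.sub_apply] at this
    calc (∑ j, c j * f.1 (ξ j)) = ∑ j, c j * δ j v := by
          refine Finset.sum_congr rfl fun j _ => by rw [hfv, hδ]
      _ = φ v - g v := this
  have hif : (∫ x, f.1 x ∂μ) = φ v := by rw [hφ, hfv]
  have : |(∫ x, f.1 x ∂μ) - ∑ j, c j * f.1 (ξ j)| = |g v| := by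
    rw [hif, hsum]; ring_nf
  rw [this]
  calc |g v| = ‖g v‖ := rfl
    _ ≤ ‖g‖ * ‖v‖ := g.le_opNorm v
    _ ≤ e * 1 := mul_le_mul (hgnorm ▸ hφYnorm) hv (norm_nonneg v) he0
    _ = e := mul_one e
end
end

section
/- Let q = 2n with n ∈ ℕ, let Ω be a compact subset of ℝ^d with a probability measure μ, and let W ⊂ C(Ω) be a class of real-valued continuous functions that is symmetric (f ∈ W ⟹ −f ∈ W), convex, contains the constant function 1, and has the quasi-algebra property with constant a. Then there exists a constant c(a,n) > 0 such that for every m ∈ ℕ, er_m^o(W, L_q) ≥ c(a,n) κ_m(W). -/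
open MeasureTheory Finset

noncomputable section

/-- The error functional of a cubature formula. -/
def Efn {α : Type*} [MeasurableSpace α] (μ : Measure α) {m : ℕ}
    (ξ : Fin m → α) (lam : Fin m → ℝ) (h : α → ℝ) : ℝ :=
  (∫ x, h x ∂μ) - ∑ j, lam j * h (ξ j)

lemma Efn_const_mul {α : Type*} [MeasurableSpace α] (μ : Measure α) {m : ℕ}
    (ξ : Fin m → α) (lam : Fin m → ℝ) (c : ℝ) (h : α → ℝ) :
    Efn μ ξ lam (fun x => c * h x) = c * Efn μ ξ lam h := by
  simp only [Efn]
  rw [integral_const_mul, mul_sub, Finset.mul_sum]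
  congr 1
  exact Finset.sum_congr rfl fun j _ => by ring

lemma Efn_sub {α : Type*} [MeasurableSpace α] (μ : Measure α) {m : ℕ}
    (ξ : Fin m → α) (lam : Fin m → ℝ) (h1 h2 : α → ℝ)
    (hi1 : Integrable h1 μ) (hi2 : Integrable h2 μ) :
    Efn μ ξ lam (fun x => h1 x - h2 x) = Efn μ ξ lam h1 - Efn μ ξ lam h2 := by
  simp only [Efn]
  rw [integral_sub hi1 hi2]
  simp only [mul_sub, Finset.sum_sub_distrib]
  ring

lemma Efn_sum {α : Type*} [MeasurableSpace α] (μ : Measure α) {m : ℕ}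
    (ξ : Fin m → α) (lam : Fin m → ℝ) {ι : Type*} (s : Finset ι) (F : ι → α → ℝ)
    (hi : ∀ k ∈ s, Integrable (F k) μ) :
    Efn μ ξ lam (fun x => ∑ k ∈ s, F k x) = ∑ k ∈ s, Efn μ ξ lam (F k) := by
  simp only [Efn]
  rw [integral_finset_sum s hi, Finset.sum_sub_distrib]
  congr 1
  simp_rw [Finset.mul_sum]
  exact Finset.sum_comm

lemma binom_diff (q : ℕ) (y : ℝ) :
    (1+y)^q - (1-y)^q
      = ∑ k ∈ Finset.range (q+1), ((q.choose k : ℝ) * (1 - (-1)^k)) * y^k := by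
  rw [show (1+y) = y+1 from add_comm 1 y, show (1-y) = -y+1 from by ring,
    add_pow, add_pow, ← Finset.sum_sub_distrib]
  refine Finset.sum_congr rfl fun k _ => ?_
  rw [neg_pow]
  ring

private lemma abs_sub_le' (x y : ℝ) : |x - y| ≤ |x| + |y| := by
  simpa [sub_eq_add_neg] using abs_add_le x (-y)

/-- Let `q = 2n`, `n ≥ 1`, and let `W ⊂ C(Ω)` be a symmetric convex
class of real continuous functions containing the constant `1` and having the quasi-algebra
property with constant `a > 0`.  Then there is `c(a,n) > 0` with
`er_m^o(W, L_q) ≥ c(a,n) κ_m(W)` for every `m`. -/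
theorem ermo_Lq_ge_kappa_even {d : ℕ} (Ω : Set (Fin d → ℝ)) (hΩ : IsCompact Ω)
    (μ : Measure Ω) [IsProbabilityMeasure μ]
    (W : Set (Ω → ℝ)) (hWc : ∀ f ∈ W, Continuous f)
    (n : ℕ) (hn : 1 ≤ n) (a : ℝ) (ha : 0 < a)
    (hsym : ∀ f ∈ W, (fun x => -f x) ∈ W)
    (hconv : Convex ℝ W)
    (hone : (fun _ => (1 : ℝ)) ∈ W)
    (hqa : ∀ f ∈ W, ∀ g ∈ W, (fun x => f x * g x / a) ∈ W) :
    ∃ c : ℝ, 0 < c ∧ ∀ m : ℕ, ermoLq μ W (2 * n) m ≥ c * kappam μ W m := by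
  haveI : CompactSpace Ω := isCompact_iff_compactSpace.mp hΩ
  have hint : ∀ h : Ω → ℝ, Continuous h → Integrable h μ := fun h hc =>
    hc.integrable_of_hasCompactSupport (HasCompactSupport.of_compactSpace h)
  set q := 2 * n with hqdef
  have hq2 : 2 ≤ q := by omega
  have hq_even : Even q := even_two_mul n
  have hqR : (0:ℝ) < (q:ℝ) := by
    have : 0 < q := by omega
    exact_mod_cast this
  -- the parameter t
  set t : ℝ := min 1 (min (1/a) ((q:ℝ)/(2^(q+1)*a))) with htdef
  have ht0 : 0 < t := by
    refine lt_min one_pos (lt_min (by positivity) ?_)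
    positivity
  have ht1 : t ≤ 1 := min_le_left _ _
  have hta0 : 0 ≤ t * a := mul_nonneg ht0.le ha.le
  have hta1 : t * a ≤ 1 := by
    have h : t ≤ 1/a := (min_le_right _ _).trans (min_le_left _ _)
    calc t * a ≤ (1/a) * a := mul_le_mul_of_nonneg_right h ha.le
    _ = 1 := by field_simp
  have hta2 : t * a ≤ (q:ℝ)/2^(q+1) := by
    have h : t ≤ (q:ℝ)/(2^(q+1)*a) := (min_le_right _ _).trans (min_le_right _ _)
    calc t * a ≤ ((q:ℝ)/(2^(q+1)*a)) * a := mul_le_mul_of_nonneg_right h ha.le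
    _ = (q:ℝ)/2^(q+1) := by field_simp
  -- powers stay in W
  have hpow : ∀ F : Ω → ℝ, F ∈ W → ∀ k : ℕ, (fun x => F x ^ (k+1) / a ^ k) ∈ W := by
    intro F hF k
    induction k with
    | zero => simpa using hF
    | succ k ih =>
      have h := hqa _ ih F hF
      have e : (fun x => (F x ^ (k+1) / a ^ k) * F x / a)
          = (fun x => F x ^ (k+1+1) / a ^ (k+1)) := by
        funext x
        rw [pow_succ, pow_succ]
        field_simp
        ring
      rw [← e]
      exact h
  -- zero function in W
  have h0W : (fun _ : Ω => (0:ℝ)) ∈ W := by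
    have h := hconv hone (hsym _ hone) (by norm_num : (0:ℝ) ≤ 1/2)
      (by norm_num : (0:ℝ) ≤ 1/2) (by norm_num)
    have e : ((1:ℝ)/2) • (fun _ : Ω => (1:ℝ)) + ((1:ℝ)/2) • (fun x : Ω => -(fun _ : Ω => (1:ℝ)) x)
        = (fun _ : Ω => (0:ℝ)) := by
      funext x; simp [Pi.add_apply, Pi.smul_apply, smul_eq_mul]
    rw [← e]
    exact h
  refine ⟨(q:ℝ) * t / 2^(q+1), by positivity, fun m => ?_⟩
  set c : ℝ := (q:ℝ) * t / 2^(q+1) with hcdef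
  by_cases hne : Nonempty ((Fin m → Ω) × (Fin m → ℝ))
  swap
  · haveI := not_nonempty_iff.mp hne
    have h1 : kappam μ W m = 0 := Real.iInf_of_isEmpty _
    have h2 : ermoLq μ W q m = 0 := Real.iInf_of_isEmpty _
    rw [ge_iff_le, h1, h2, mul_zero]
  -- nonnegativity of the sup families
  have hS0 : ∀ p : (Fin m → Ω) × (Fin m → ℝ), 0 ≤ ⨆ f : W, |Efn μ p.1 p.2 f.1| := by
    intro p
    by_cases h : BddAbove (Set.range fun f : W => |Efn μ p.1 p.2 f.1|)
    · exact le_trans (abs_nonneg _) (le_ciSup h (⟨_, hone⟩ : W))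
    · rw [Real.iSup_of_not_bddAbove h]
  have hD0 : ∀ p : (Fin m → Ω) × (Fin m → ℝ),
      0 ≤ ⨆ f : W, |Efn μ p.1 p.2 (fun x => |f.1 x| ^ q)| := by
    intro p
    by_cases h : BddAbove (Set.range fun f : W => |Efn μ p.1 p.2 (fun x => |f.1 x| ^ q)|)
    · exact le_trans (abs_nonneg _) (le_ciSup h (⟨_, hone⟩ : W))
    · rw [Real.iSup_of_not_bddAbove h]
  -- κ_m ≤ S(p) for every p
  have hκle : ∀ p : (Fin m → Ω) × (Fin m → ℝ),
      kappam μ W m ≤ ⨆ f : W, |Efn μ p.1 p.2 f.1| := by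
    intro p
    have hbb : BddBelow (Set.range fun p' : (Fin m → Ω) × (Fin m → ℝ) =>
        ⨆ f : W, |Efn μ p'.1 p'.2 f.1|) := ⟨0, by rintro x ⟨p', rfl⟩; exact hS0 p'⟩
    exact ciInf_le hbb p
  -- key pointwise claim
  have key : ∀ p : (Fin m → Ω) × (Fin m → ℝ),
      c * kappam μ W m ≤ ⨆ f : W, |Efn μ p.1 p.2 (fun x => |f.1 x| ^ q)| := by
    intro p
    by_cases hbS : BddAbove (Set.range fun f : W => |Efn μ p.1 p.2 f.1|)
    swap
    · have hS : (⨆ f : W, |Efn μ p.1 p.2 f.1|) = 0 := Real.iSup_of_not_bddAbove hbS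
      have : kappam μ W m ≤ 0 := (hκle p).trans_eq hS
      calc c * kappam μ W m ≤ c * 0 := by
            exact mul_le_mul_of_nonneg_left this (by positivity)
      _ = 0 := by ring
      _ ≤ _ := hD0 p
    obtain ⟨M, hM⟩ := hbS
    set S : ℝ := ⨆ f : W, |Efn μ p.1 p.2 f.1| with hSdef
    set D : ℝ := ⨆ f : W, |Efn μ p.1 p.2 (fun x => |f.1 x| ^ q)| with hDdef
    have hS0' : 0 ≤ S := hS0 p
    have hD0' : 0 ≤ D := hD0 p
    -- D family is bounded above
    have hbD : BddAbove (Set.range fun f : W => |Efn μ p.1 p.2 (fun x => |f.1 x| ^ q)|) := by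
      refine ⟨a^(q-1) * M, ?_⟩
      rintro y ⟨f, rfl⟩
      obtain ⟨j, hj⟩ : ∃ j, q = j + 1 := ⟨q-1, by omega⟩
      have heqv : Even (j+1) := hj ▸ hq_even
      have hmemj : (fun x => f.1 x ^ (j+1) / a ^ j) ∈ W := hpow f.1 f.2 j
      have e1 : (fun x : Ω => |f.1 x| ^ q) = (fun x => f.1 x ^ (j+1)) := by
        funext x; rw [hj]; exact heqv.pow_abs _
      have e2 : Efn μ p.1 p.2 (fun x => f.1 x ^ (j+1))
          = a^j * Efn μ p.1 p.2 (fun x => f.1 x ^ (j+1) / a ^ j) := by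
        rw [← Efn_const_mul]
        congr 1
        funext x
        field_simp
      have h3 : |Efn μ p.1 p.2 (fun x => f.1 x ^ (j+1) / a ^ j)| ≤ M :=
        hM ⟨(⟨_, hmemj⟩ : W), rfl⟩
      calc |Efn μ p.1 p.2 (fun x => |f.1 x| ^ q)|
          = a^j * |Efn μ p.1 p.2 (fun x => f.1 x ^ (j+1) / a ^ j)| := by
            rw [e1, e2, abs_mul, abs_of_nonneg (by positivity : (0:ℝ) ≤ a^j)]
      _ ≤ a^j * M := mul_le_mul_of_nonneg_left h3 (by positivity)
      _ = a^(q-1) * M := by rw [hj]; simp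
    -- the central estimate: for every f ∈ W
    have hle : ∀ f : W, |Efn μ p.1 p.2 f.1| ≤ 2^q * D / ((q:ℝ)*t) + S/2 := by
      rintro ⟨F, hF⟩
      simp only
      have hFc : Continuous F := hWc F hF
      -- memberships
      have htf : (fun x => t * F x) ∈ W := by
        have h := hconv hF h0W ht0.le (by linarith : (0:ℝ) ≤ 1 - t) (by ring)
        have e : t • F + (1-t) • (fun _ : Ω => (0:ℝ)) = (fun x => t * F x) := by
          funext x; simp [Pi.add_apply, Pi.smul_apply, smul_eq_mul]
        rw [← e]
        exact h
      have hgp : (fun x => (1 + t * F x)/2) ∈ W := by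
        have h := hconv hone htf (by norm_num : (0:ℝ) ≤ 1/2)
          (by norm_num : (0:ℝ) ≤ 1/2) (by norm_num)
        have e : ((1:ℝ)/2) • (fun _ : Ω => (1:ℝ)) + ((1:ℝ)/2) • (fun x => t * F x)
            = (fun x => (1 + t * F x)/2) := by
          funext x; simp [Pi.add_apply, Pi.smul_apply, smul_eq_mul]; ring
        rw [← e]
        exact h
      have hgm : (fun x => (1 - t * F x)/2) ∈ W := by
        have h := hconv hone (hsym _ htf) (by norm_num : (0:ℝ) ≤ 1/2)
          (by norm_num : (0:ℝ) ≤ 1/2) (by norm_num)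
        have e : ((1:ℝ)/2) • (fun _ : Ω => (1:ℝ)) + ((1:ℝ)/2) • (fun x => -(fun y => t * F y) x)
            = (fun x => (1 - t * F x)/2) := by
          funext x; simp [Pi.add_apply, Pi.smul_apply, smul_eq_mul]; ring
        rw [← e]
        exact h
      -- abbreviations
      set A : ℝ := Efn μ p.1 p.2 (fun x => ((1 + t * F x)/2) ^ q) with hAdef
      set B : ℝ := Efn μ p.1 p.2 (fun x => ((1 - t * F x)/2) ^ q) with hBdef
      -- the polynomial identity applied to the error functional
      have hstar : (2:ℝ)^q * (A - B)
          = ∑ k ∈ range (q+1),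
              ((q.choose k : ℝ) * (1 - (-1)^k)) * Efn μ p.1 p.2 (fun x => (t * F x) ^ k) := by
        have hfun : (fun x : Ω => ∑ k ∈ range (q+1),
              ((q.choose k : ℝ) * (1 - (-1)^k)) * (t * F x) ^ k)
            = (fun x : Ω => (2:ℝ)^q * (((1 + t * F x)/2) ^ q - ((1 - t * F x)/2) ^ q)) := by
          funext x
          have h1 : (2:ℝ)^q * (((1 + t * F x)/2) ^ q) = (1 + t * F x)^q := by
            rw [← mul_pow]; congr 1; ring
          have h2 : (2:ℝ)^q * (((1 - t * F x)/2) ^ q) = (1 - t * F x)^q := by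
            rw [← mul_pow]; congr 1; ring
          have h3 := binom_diff q (t * F x)
          rw [mul_sub, h1, h2]
          exact h3.symm
        refine Eq.symm ?_
        calc ∑ k ∈ range (q+1),
              ((q.choose k : ℝ) * (1 - (-1)^k)) * Efn μ p.1 p.2 (fun x => (t * F x) ^ k)
            = ∑ k ∈ range (q+1),
              Efn μ p.1 p.2 (fun x => ((q.choose k : ℝ) * (1 - (-1)^k)) * (t * F x) ^ k) :=
              Finset.sum_congr rfl fun k _ => (Efn_const_mul μ p.1 p.2 _ _).symm
        _ = Efn μ p.1 p.2 (fun x => ∑ k ∈ range (q+1),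
              ((q.choose k : ℝ) * (1 - (-1)^k)) * (t * F x) ^ k) := by
            refine (Efn_sum μ p.1 p.2 _ _ fun k _ => ?_).symm
            exact hint _ (continuous_const.mul ((continuous_const.mul hFc).pow k))
        _ = Efn μ p.1 p.2 (fun x => (2:ℝ)^q *
              (((1 + t * F x)/2) ^ q - ((1 - t * F x)/2) ^ q)) := by rw [hfun]
        _ = (2:ℝ)^q * Efn μ p.1 p.2
              (fun x => ((1 + t * F x)/2) ^ q - ((1 - t * F x)/2) ^ q) :=
            Efn_const_mul μ p.1 p.2 _ _
        _ = (2:ℝ)^q * (A - B) := by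
            rw [Efn_sub μ p.1 p.2 (fun x => ((1 + t * F x)/2) ^ q) (fun x => ((1 - t * F x)/2) ^ q)
              (hint _ (((continuous_const.add (continuous_const.mul hFc)).div_const 2).pow q))
              (hint _ (((continuous_const.sub (continuous_const.mul hFc)).div_const 2).pow q))]
      -- split off the k = 1 term
      have hmem1 : (1:ℕ) ∈ range (q+1) := by
        simp only [Finset.mem_range]; omega
      have hsum_eq : ∑ k ∈ range (q+1),
            ((q.choose k : ℝ) * (1 - (-1)^k)) * Efn μ p.1 p.2 (fun x => (t * F x) ^ k)
          = 2*(q:ℝ)*t*Efn μ p.1 p.2 F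
            + ∑ k ∈ (range (q+1)).erase 1,
              ((q.choose k : ℝ) * (1 - (-1)^k)) * Efn μ p.1 p.2 (fun x => (t * F x) ^ k) := by
        rw [← Finset.add_sum_erase _ _ hmem1]
        congr 1
        have e : (fun x : Ω => (t * F x) ^ 1) = (fun x => t * F x) := by
          funext x; rw [pow_one]
        rw [e, Efn_const_mul μ p.1 p.2 t F]
        simp only [Nat.choose_one_right, pow_one]
        ring
      -- bound the tail sum
      have hconst0 : 0 ≤ 2*t*((q:ℝ)/2^(q+1))*S := by
        have : (0:ℝ) ≤ 2*t*((q:ℝ)/2^(q+1)) := by positivity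
        exact mul_nonneg this hS0'
      have hterm : ∀ k ∈ (range (q+1)).erase 1,
          |((q.choose k : ℝ) * (1 - (-1)^k)) * Efn μ p.1 p.2 (fun x => (t * F x) ^ k)|
            ≤ (q.choose k : ℝ) * (2*t*((q:ℝ)/2^(q+1))*S) := by
        intro k hk
        obtain ⟨hk1, _⟩ := Finset.mem_erase.mp hk
        rcases Nat.even_or_odd k with he | ho
        · have hz : ((q.choose k : ℝ) * (1 - (-1)^k)) = 0 := by
            rw [he.neg_one_pow]; ring
          rw [hz, zero_mul, abs_zero]
          exact mul_nonneg (Nat.cast_nonneg _) hconst0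
        · obtain ⟨r, hr⟩ := ho
          have hr1 : 1 ≤ r := by omega
          subst hr
          have hmemk : (fun x => F x ^ (2*r+1) / a ^ (2*r)) ∈ W := hpow F hF (2*r)
          have hEk : Efn μ p.1 p.2 (fun x => (t * F x) ^ (2*r+1))
              = (t^(2*r+1) * a^(2*r)) * Efn μ p.1 p.2 (fun x => F x ^ (2*r+1) / a ^ (2*r)) := by
            rw [← Efn_const_mul]
            congr 1
            funext x
            rw [mul_pow]
            field_simp
          have hfkS : |Efn μ p.1 p.2 (fun x => F x ^ (2*r+1) / a ^ (2*r))| ≤ S :=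
            le_ciSup (⟨M, hM⟩ : BddAbove _) (⟨_, hmemk⟩ : W)
          have hcoef : t^(2*r+1) * a^(2*r) ≤ t * ((q:ℝ)/2^(q+1)) := by
            have e : t^(2*r+1) * a^(2*r) = t * (t*a)^(2*r) := by
              rw [mul_pow]; ring
            rw [e]
            have h1 : (t*a)^(2*r) ≤ (t*a)^1 := pow_le_pow_of_le_one hta0 hta1 (by omega)
            rw [pow_one] at h1
            exact mul_le_mul_of_nonneg_left (h1.trans hta2) ht0.le
          have hE2 : |Efn μ p.1 p.2 (fun x => (t * F x) ^ (2*r+1))|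
              ≤ (t*((q:ℝ)/2^(q+1))) * S := by
            rw [hEk, abs_mul, abs_of_nonneg
              (mul_nonneg (pow_nonneg ht0.le _) (pow_nonneg ha.le _))]
            exact mul_le_mul hcoef hfkS (abs_nonneg _)
              (mul_nonneg ht0.le (by positivity))
          have hck : ((q.choose (2*r+1) : ℝ) * (1 - (-1)^(2*r+1)))
              = (q.choose (2*r+1) : ℝ) * 2 := by
            rw [Odd.neg_one_pow ⟨r, by ring⟩]; ring
          calc |((q.choose (2*r+1) : ℝ) * (1 - (-1)^(2*r+1)))
                * Efn μ p.1 p.2 (fun x => (t * F x) ^ (2*r+1))|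
              = |((q.choose (2*r+1) : ℝ) * (1 - (-1)^(2*r+1)))|
                * |Efn μ p.1 p.2 (fun x => (t * F x) ^ (2*r+1))| := abs_mul _ _
          _ = (q.choose (2*r+1) : ℝ) * 2
                * |Efn μ p.1 p.2 (fun x => (t * F x) ^ (2*r+1))| := by
              rw [hck, abs_of_nonneg (by positivity)]
          _ ≤ (q.choose (2*r+1) : ℝ) * 2 * ((t*((q:ℝ)/2^(q+1))) * S) :=
              mul_le_mul_of_nonneg_left hE2 (by positivity)
          _ = (q.choose (2*r+1) : ℝ) * (2*t*((q:ℝ)/2^(q+1))*S) := by ring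
      have hchoose_sum : ∑ k ∈ range (q+1), (q.choose k : ℝ) = 2^q := by
        exact_mod_cast Nat.sum_range_choose q
      have hTsum : |∑ k ∈ (range (q+1)).erase 1,
            ((q.choose k : ℝ) * (1 - (-1)^k)) * Efn μ p.1 p.2 (fun x => (t * F x) ^ k)|
          ≤ (q:ℝ)*t*S := by
        calc |∑ k ∈ (range (q+1)).erase 1,
              ((q.choose k : ℝ) * (1 - (-1)^k)) * Efn μ p.1 p.2 (fun x => (t * F x) ^ k)|
            ≤ ∑ k ∈ (range (q+1)).erase 1,
              |((q.choose k : ℝ) * (1 - (-1)^k)) * Efn μ p.1 p.2 (fun x => (t * F x) ^ k)| :=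
            Finset.abs_sum_le_sum_abs _ _
        _ ≤ ∑ k ∈ (range (q+1)).erase 1, (q.choose k : ℝ) * (2*t*((q:ℝ)/2^(q+1))*S) :=
            Finset.sum_le_sum hterm
        _ ≤ ∑ k ∈ range (q+1), (q.choose k : ℝ) * (2*t*((q:ℝ)/2^(q+1))*S) :=
            Finset.sum_le_sum_of_subset_of_nonneg (Finset.erase_subset _ _)
              (fun k _ _ => mul_nonneg (Nat.cast_nonneg _) hconst0)
        _ = 2^q * (2*t*((q:ℝ)/2^(q+1))*S) := by rw [← Finset.sum_mul, hchoose_sum]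
        _ = (q:ℝ)*t*S := by
            rw [pow_succ]
            field_simp
      -- |A|, |B| ≤ D
      have hAD : |A| ≤ D := by
        have h := le_ciSup hbD (⟨_, hgp⟩ : W)
        have e : (fun x : Ω => |(1 + t * F x)/2| ^ q) = (fun x => ((1 + t * F x)/2) ^ q) := by
          funext x; exact hq_even.pow_abs _
        rw [e] at h
        exact h
      have hBD : |B| ≤ D := by
        have h := le_ciSup hbD (⟨_, hgm⟩ : W)
        have e : (fun x : Ω => |(1 - t * F x)/2| ^ q) = (fun x => ((1 - t * F x)/2) ^ q) := by
          funext x; exact hq_even.pow_abs _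
        rw [e] at h
        exact h
      -- assemble
      have hmain : 2*(q:ℝ)*t*Efn μ p.1 p.2 F
          = 2^q*A - 2^q*B - ∑ k ∈ (range (q+1)).erase 1,
              ((q.choose k : ℝ) * (1 - (-1)^k)) * Efn μ p.1 p.2 (fun x => (t * F x) ^ k) := by
        have h := hstar
        rw [hsum_eq] at h
        linarith
      have habs : 2*(q:ℝ)*t*|Efn μ p.1 p.2 F| ≤ 2^q*D + 2^q*D + (q:ℝ)*t*S := by
        have h1 : |2*(q:ℝ)*t*Efn μ p.1 p.2 F| = 2*(q:ℝ)*t*|Efn μ p.1 p.2 F| := by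
          rw [abs_mul, abs_of_nonneg (by positivity : (0:ℝ) ≤ 2*(q:ℝ)*t)]
        rw [← h1, hmain]
        have hA' : |(2:ℝ)^q*A| ≤ 2^q*D := by
          rw [abs_mul, abs_of_nonneg (by positivity : (0:ℝ) ≤ (2:ℝ)^q)]
          exact mul_le_mul_of_nonneg_left hAD (by positivity)
        have hB' : |(2:ℝ)^q*B| ≤ 2^q*D := by
          rw [abs_mul, abs_of_nonneg (by positivity : (0:ℝ) ≤ (2:ℝ)^q)]
          exact mul_le_mul_of_nonneg_left hBD (by positivity)
        calc |2^q*A - 2^q*B - ∑ k ∈ (range (q+1)).erase 1,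
              ((q.choose k : ℝ) * (1 - (-1)^k)) * Efn μ p.1 p.2 (fun x => (t * F x) ^ k)|
            ≤ |(2:ℝ)^q*A - 2^q*B| + |∑ k ∈ (range (q+1)).erase 1,
              ((q.choose k : ℝ) * (1 - (-1)^k)) * Efn μ p.1 p.2 (fun x => (t * F x) ^ k)| :=
            abs_sub_le' _ _
        _ ≤ (|(2:ℝ)^q*A| + |(2:ℝ)^q*B|) + (q:ℝ)*t*S := by
            have := abs_sub_le' ((2:ℝ)^q*A) ((2:ℝ)^q*B)
            linarith [hTsum]
        _ ≤ 2^q*D + 2^q*D + (q:ℝ)*t*S := by linarith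
      -- divide
      have hqt : (0:ℝ) < (q:ℝ)*t := by positivity
      have heq : (2*(q:ℝ)*t) * (2^q * D / ((q:ℝ)*t) + S/2)
          = 2^q*D + 2^q*D + (q:ℝ)*t*S := by
        field_simp
        ring
      refine le_of_mul_le_mul_left ?_ (by positivity : (0:ℝ) < 2*(q:ℝ)*t)
      rw [heq]
      exact habs
    -- sup over f
    have hSle : S ≤ 2^q * D / ((q:ℝ)*t) + S/2 := by
      refine Real.iSup_le hle ?_
      have : (0:ℝ) ≤ 2^q * D / ((q:ℝ)*t) := by
        apply div_nonneg (mul_nonneg (by positivity) hD0')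
        positivity
      linarith
    have hS2 : S ≤ 2 * (2^q * D / ((q:ℝ)*t)) := by linarith
    have hfin : c * (2 * (2^q * D / ((q:ℝ)*t))) = D := by
      rw [hcdef, pow_succ]
      field_simp
    calc c * kappam μ W m ≤ c * S := mul_le_mul_of_nonneg_left (hκle p) (by positivity)
    _ ≤ c * (2 * (2^q * D / ((q:ℝ)*t))) := mul_le_mul_of_nonneg_left hS2 (by positivity)
    _ = D := hfin
  -- conclude
  rw [ge_iff_le]
  exact le_ciInf key
end
end
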